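/- arXiv:1406.3503 — 2 statements merged into one kernel-verified Lean document; each statement's English description precedes it below -/
import Mathlib

section
/- Let ε = exp(2πi/5), H = diag[ε⁴,ε²,ε,ε³], α = (1-√5)/2, and I the symmetric matrix with first row [1,α,α²,-α] and subsequent rows its cyclic shifts as in rows [α,α²,-α,1],[α²,-α,1,α],[-α,1,α,α²]. If f is a homogeneous cubic form in x,y,z,t such that f∘H⁻¹ and f∘I⁻¹ are both proportional to f and V(f) is nonsingular, then f is a scalar multiple of x²y + y²z + z²t + t²x. -/
open MvPolynomial Matrix Complex

/-- Linear substitution of the variables of `f` by the matrix `A`. -/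
noncomputable def substM (A : Matrix (Fin 4) (Fin 4) ℂ)
    (f : MvPolynomial (Fin 4) ℂ) : MvPolynomial (Fin 4) ℂ :=
  MvPolynomial.aeval (fun i => ∑ j : Fin 4, MvPolynomial.C (A i j) * MvPolynomial.X j) f

lemma substM_substM (A B : Matrix (Fin 4) (Fin 4) ℂ) (f : MvPolynomial (Fin 4) ℂ) :
    substM A (substM B f) = substM (B * A) f := by
  unfold substM
  rw [← AlgHom.comp_apply, MvPolynomial.comp_aeval]
  have h : (fun i => (aeval fun i => ∑ j : Fin 4, C (A i j) * X j) (∑ j : Fin 4, C (B i j) * X j))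
      = fun i => ∑ j : Fin 4, C ((B * A) i j) * X j := by
    funext i
    simp only [map_sum, _root_.map_mul, aeval_C, aeval_X, Matrix.mul_apply, Fin.sum_univ_four,
      _root_.map_add, MvPolynomial.algebraMap_eq]
    ring
  rw [h]

lemma substM_one (f : MvPolynomial (Fin 4) ℂ) : substM 1 f = f := by
  unfold substM
  have h : (fun i : Fin 4 => ∑ j : Fin 4, C ((1 : Matrix (Fin 4) (Fin 4) ℂ) i j) * X j)
      = (X : Fin 4 → MvPolynomial (Fin 4) ℂ) := by
    funext i
    fin_cases i <;> simp [Fin.sum_univ_four, Matrix.one_apply]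
  rw [h, aeval_X_left_apply]

lemma substM_smul (A : Matrix (Fin 4) (Fin 4) ℂ) (c : ℂ) (f : MvPolynomial (Fin 4) ℂ) :
    substM A (c • f) = c • substM A f := by
  unfold substM; exact map_smul _ _ _

lemma substM_eval (A : Matrix (Fin 4) (Fin 4) ℂ) (f : MvPolynomial (Fin 4) ℂ)
    (v : Fin 4 → ℂ) : eval v (substM A f) = eval (A.mulVec v) f := by
  unfold substM
  rw [aeval_def, eval_eval₂]
  have h1 : ((eval v).comp (algebraMap ℂ (MvPolynomial (Fin 4) ℂ))) = RingHom.id ℂ := by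
    ext r; simp [algebraMap_eq]
  have h2 : (fun s : Fin 4 => eval v (∑ j : Fin 4, C (A s j) * X j)) = A.mulVec v := by
    funext i; simp [Fin.sum_univ_four, Matrix.mulVec, dotProduct]
  rw [h1, h2, eval₂_id]

lemma substM_diagonal (d : Fin 4 → ℂ) (f : MvPolynomial (Fin 4) ℂ) :
    substM (Matrix.diagonal d) f = aeval (fun i => C (d i) * X i) f := by
  unfold substM
  have h : (fun i : Fin 4 => ∑ j : Fin 4, C (Matrix.diagonal d i j) * X j)
      = fun i => C (d i) * X i := by
    funext i
    fin_cases i <;> simp [Fin.sum_univ_four, Matrix.diagonal]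
  rw [h]

lemma coeff_scaleX (d : Fin 4 → ℂ) (f : MvPolynomial (Fin 4) ℂ) (m : Fin 4 →₀ ℕ) :
    coeff m (aeval (fun i => C (d i) * X i) f) = (∏ i, d i ^ m i) * coeff m f := by
  induction f using MvPolynomial.induction_on' with
  | add p q hp hq => rw [_root_.map_add, coeff_add, hp, hq, coeff_add]; ring
  | monomial m' a =>
    rw [aeval_monomial]
    rw [show (m'.prod fun i k => (C (d i) * X i) ^ k)
        = (m'.prod fun i k => (C (d i)) ^ k) * (m'.prod fun i k => (X i : MvPolynomial (Fin 4) ℂ) ^ k) from by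
      rw [Finsupp.prod, Finsupp.prod, Finsupp.prod, ← Finset.prod_mul_distrib]
      exact Finset.prod_congr rfl fun i _ => mul_pow _ _ _]
    rw [show (m'.prod fun i k => (C (d i) : MvPolynomial (Fin 4) ℂ) ^ k) = C (m'.prod fun i k => d i ^ k) from by
      rw [Finsupp.prod, Finsupp.prod, map_prod]; exact Finset.prod_congr rfl fun i _ => by rw [_root_.map_pow]]
    rw [show (m'.prod fun i k => (X i : MvPolynomial (Fin 4) ℂ) ^ k) = monomial m' 1 from by
      rw [monomial_eq, _root_.map_one, one_mul]]
    rw [algebraMap_eq, ← mul_assoc, ← _root_.map_mul, coeff_C_mul]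
    simp only [coeff_monomial]
    by_cases h : m' = m
    · subst h
      have hpr : (m'.prod fun i k => d i ^ k) = ∏ i, d i ^ m' i :=
        Finsupp.prod_fintype _ _ fun i => pow_zero _
      simp [hpr]; ring
    · simp [h]

noncomputable def ee (a b c d : ℕ) : Fin 4 →₀ ℕ := Finsupp.equivFunOnFinite.symm ![a, b, c, d]

@[simp] lemma ee_apply0 (a b c d : ℕ) : ee a b c d 0 = a := rfl
@[simp] lemma ee_apply1 (a b c d : ℕ) : ee a b c d 1 = b := rfl
@[simp] lemma ee_apply2 (a b c d : ℕ) : ee a b c d 2 = c := rfl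
@[simp] lemma ee_apply3 (a b c d : ℕ) : ee a b c d 3 = d := rfl

lemma eq_ee (m : Fin 4 →₀ ℕ) : m = ee (m 0) (m 1) (m 2) (m 3) := by
  ext i
  fin_cases i <;> rfl

lemma ee_inj {a b c d a' b' c' d' : ℕ} :
    ee a b c d = ee a' b' c' d' ↔ a = a' ∧ b = b' ∧ c = c' ∧ d = d' := by
  constructor
  · intro h
    exact ⟨by rw [← ee_apply0 a b c d, h, ee_apply0],
           by rw [← ee_apply1 a b c d, h, ee_apply1],
           by rw [← ee_apply2 a b c d, h, ee_apply2],
           by rw [← ee_apply3 a b c d, h, ee_apply3]⟩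
  · rintro ⟨rfl, rfl, rfl, rfl⟩; rfl

lemma mon_eq (a b c d : ℕ) (r : ℂ) :
    (monomial (ee a b c d)) r
      = C r * X 0 ^ a * X 1 ^ b * X 2 ^ c * X 3 ^ d := by
  rw [monomial_eq, Finsupp.prod_fintype _ _ fun i => pow_zero _, Fin.prod_univ_four]
  simp only [ee_apply0, ee_apply1, ee_apply2, ee_apply3]
  ring

lemma hdeg_of_mem {f : MvPolynomial (Fin 4) ℂ} (hf : f.IsHomogeneous 3)
    {m : Fin 4 →₀ ℕ} (hm : m ∈ f.support) : m 0 + m 1 + m 2 + m 3 = 3 := by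
  have h := hf (MvPolynomial.mem_support_iff.mp hm)
  have h2 : m.degree = 3 := by
    rw [Finsupp.degree_eq_weight_one]; exact h
  rw [Finsupp.degree_apply] at h2
  rw [show (∑ i ∈ m.support, m i) = ∑ i : Fin 4, m i from
    Finset.sum_subset (Finset.subset_univ _) (fun i _ hi => Finsupp.notMem_support_iff.mp hi)] at h2
  rw [Fin.sum_univ_four] at h2
  exact h2

lemma classEnum0 (n0 n1 n2 n3 : ℕ) (hd3 : n0 + n1 + n2 + n3 = 3)
    (hw5 : (4 * n0 + 2 * n1 + n2 + 3 * n3) % 5 = 0) :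
    (n0 = 0 ∧ n1 = 0 ∧ n2 = 2 ∧ n3 = 1) ∨ (n0 = 0 ∧ n1 = 2 ∧ n2 = 1 ∧ n3 = 0) ∨ (n0 = 1 ∧ n1 = 0 ∧ n2 = 0 ∧ n3 = 2) ∨ (n0 = 2 ∧ n1 = 1 ∧ n2 = 0 ∧ n3 = 0) := by
  have hb0 : n0 ≤ 3 := by omega
  have hb1 : n1 ≤ 3 := by omega
  have hb2 : n2 ≤ 3 := by omega
  interval_cases n0 <;> interval_cases n1 <;> interval_cases n2 <;> omega

lemma classEnum1 (n0 n1 n2 n3 : ℕ) (hd3 : n0 + n1 + n2 + n3 = 3)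
    (hw5 : (4 * n0 + 2 * n1 + n2 + 3 * n3) % 5 = 1) :
    (n0 = 0 ∧ n1 = 1 ∧ n2 = 1 ∧ n3 = 1) ∨ (n0 = 0 ∧ n1 = 3 ∧ n2 = 0 ∧ n3 = 0) ∨ (n0 = 1 ∧ n1 = 0 ∧ n2 = 2 ∧ n3 = 0) ∨ (n0 = 2 ∧ n1 = 0 ∧ n2 = 0 ∧ n3 = 1) := by
  have hb0 : n0 ≤ 3 := by omega
  have hb1 : n1 ≤ 3 := by omega
  have hb2 : n2 ≤ 3 := by omega
  interval_cases n0 <;> interval_cases n1 <;> interval_cases n2 <;> omega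

lemma classEnum2 (n0 n1 n2 n3 : ℕ) (hd3 : n0 + n1 + n2 + n3 = 3)
    (hw5 : (4 * n0 + 2 * n1 + n2 + 3 * n3) % 5 = 2) :
    (n0 = 0 ∧ n1 = 0 ∧ n2 = 1 ∧ n3 = 2) ∨ (n0 = 0 ∧ n1 = 2 ∧ n2 = 0 ∧ n3 = 1) ∨ (n0 = 1 ∧ n1 = 1 ∧ n2 = 1 ∧ n3 = 0) ∨ (n0 = 3 ∧ n1 = 0 ∧ n2 = 0 ∧ n3 = 0) := by
  have hb0 : n0 ≤ 3 := by omega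
  have hb1 : n1 ≤ 3 := by omega
  have hb2 : n2 ≤ 3 := by omega
  interval_cases n0 <;> interval_cases n1 <;> interval_cases n2 <;> omega

lemma classEnum3 (n0 n1 n2 n3 : ℕ) (hd3 : n0 + n1 + n2 + n3 = 3)
    (hw5 : (4 * n0 + 2 * n1 + n2 + 3 * n3) % 5 = 3) :
    (n0 = 0 ∧ n1 = 0 ∧ n2 = 3 ∧ n3 = 0) ∨ (n0 = 0 ∧ n1 = 1 ∧ n2 = 0 ∧ n3 = 2) ∨ (n0 = 1 ∧ n1 = 0 ∧ n2 = 1 ∧ n3 = 1) ∨ (n0 = 1 ∧ n1 = 2 ∧ n2 = 0 ∧ n3 = 0) := by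
  have hb0 : n0 ≤ 3 := by omega
  have hb1 : n1 ≤ 3 := by omega
  have hb2 : n2 ≤ 3 := by omega
  interval_cases n0 <;> interval_cases n1 <;> interval_cases n2 <;> omega

lemma classEnum4 (n0 n1 n2 n3 : ℕ) (hd3 : n0 + n1 + n2 + n3 = 3)
    (hw5 : (4 * n0 + 2 * n1 + n2 + 3 * n3) % 5 = 4) :
    (n0 = 0 ∧ n1 = 0 ∧ n2 = 0 ∧ n3 = 3) ∨ (n0 = 0 ∧ n1 = 1 ∧ n2 = 2 ∧ n3 = 0) ∨ (n0 = 1 ∧ n1 = 1 ∧ n2 = 0 ∧ n3 = 1) ∨ (n0 = 2 ∧ n1 = 0 ∧ n2 = 1 ∧ n3 = 0) := by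
  have hb0 : n0 ≤ 3 := by omega
  have hb1 : n1 ≤ 3 := by omega
  have hb2 : n2 ≤ 3 := by omega
  interval_cases n0 <;> interval_cases n1 <;> interval_cases n2 <;> omega

set_option maxHeartbeats 1000000 in
theorem stmt15 (ε : ℂ) (hε : ε = Complex.exp (2 * Real.pi * Complex.I / 5))
    (α : ℂ) (hα : α = ((1 - Real.sqrt 5 : ℝ) : ℂ) / 2)
    (H I : Matrix (Fin 4) (Fin 4) ℂ)
    (hH : H = Matrix.diagonal ![ε ^ 4, ε ^ 2, ε, ε ^ 3])
    (hI : I = !![1, α, α ^ 2, -α;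
                 α, α ^ 2, -α, 1;
                 α ^ 2, -α, 1, α;
                 -α, 1, α, α ^ 2])
    (f : MvPolynomial (Fin 4) ℂ) (hf : f.IsHomogeneous 3)
    (hinvH : ∃ c : ℂ, c ≠ 0 ∧ substM H⁻¹ f = c • f)
    (hinvI : ∃ c : ℂ, c ≠ 0 ∧ substM I⁻¹ f = c • f)
    (hns : ¬ ∃ a : Fin 4 → ℂ, a ≠ 0 ∧
      ∀ i : Fin 4, MvPolynomial.eval a (MvPolynomial.pderiv i f) = 0) :
    ∃ c : ℂ, f = c • (MvPolynomial.X 0 ^ 2 * MvPolynomial.X 1 +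
        MvPolynomial.X 1 ^ 2 * MvPolynomial.X 2 +
        MvPolynomial.X 2 ^ 2 * MvPolynomial.X 3 +
        MvPolynomial.X 3 ^ 2 * MvPolynomial.X 0) := by
  -- basic facts about ε
  have hε0 : ε ≠ 0 := by rw [hε]; exact Complex.exp_ne_zero _
  have hε5 : ε ^ 5 = 1 := by
    rw [hε, ← Complex.exp_nat_mul]
    rw [show (5 : ℕ) * (2 * ↑Real.pi * Complex.I / 5) = 2 * ↑Real.pi * Complex.I by ring]
    exact Complex.exp_two_pi_mul_I
  have hεne1 : ε ≠ 1 := by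
    rw [hε]
    intro h
    rw [Complex.exp_eq_one_iff] at h
    obtain ⟨n, hn⟩ := h
    have hpi : (Real.pi : ℂ) ≠ 0 := by
      simpa using Real.pi_ne_zero
    have hI0 : Complex.I ≠ 0 := Complex.I_ne_zero
    have h2 : (2 : ℂ) * Real.pi * Complex.I * (5 * n - 1) = 0 := by
      linear_combination (-5 : ℂ) * hn
    rcases mul_eq_zero.mp h2 with h3 | h3
    · rcases mul_eq_zero.mp h3 with h4 | h4
      · rcases mul_eq_zero.mp h4 with h5 | h5
        · norm_num at h5
        · exact hpi h5
      · exact hI0 h4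
    · have h6 : ((5 * n - 1 : ℤ) : ℂ) = 0 := by push_cast; linear_combination h3
      have h7 : (5 * n - 1 : ℤ) = 0 := by exact_mod_cast h6
      omega
  haveI : Fact (Nat.Prime 5) := ⟨by norm_num⟩
  have horder : orderOf ε = 5 := orderOf_eq_prime hε5 hεne1
  -- basic facts about α
  have ha2 : α ^ 2 = α + 1 := by
    have h5 : ((Real.sqrt 5 : ℝ) : ℂ) ^ 2 = 5 := by
      rw [← Complex.ofReal_pow, Real.sq_sqrt (by norm_num : (5:ℝ) ≥ 0)]
      norm_num
    rw [hα]
    push_cast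
    linear_combination (1/4 : ℂ) * h5
  -- H⁻¹
  have hHinv : H⁻¹ = Matrix.diagonal ![ε, ε ^ 3, ε ^ 4, ε ^ 2] := by
    apply Matrix.inv_eq_right_inv
    rw [hH, Matrix.diagonal_mul_diagonal]
    have h : (fun i => ![ε ^ 4, ε ^ 2, ε, ε ^ 3] i * ![ε, ε ^ 3, ε ^ 4, ε ^ 2] i)
        = fun _ => (1 : ℂ) := by
      funext i
      fin_cases i <;> simp <;> linear_combination hε5
    rw [h, Matrix.diagonal_one]
  have hHinvH : H⁻¹ * H = 1 := by
    rw [hHinv, hH, Matrix.diagonal_mul_diagonal]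
    have h : (fun i => ![ε, ε ^ 3, ε ^ 4, ε ^ 2] i * ![ε ^ 4, ε ^ 2, ε, ε ^ 3] i)
        = fun _ => (1 : ℂ) := by
      funext i
      fin_cases i <;> simp <;> linear_combination hε5
    rw [h, Matrix.diagonal_one]
  obtain ⟨cH, hcH0, hcH⟩ := hinvH
  have hHf : substM H f = cH⁻¹ • f := by
    have h1 := congrArg (substM H) hcH
    rw [substM_substM, hHinvH, substM_one, substM_smul] at h1
    conv_rhs => rw [h1]
    rw [inv_smul_smul₀ hcH0]
  -- weight condition on support
  have hkey : ∀ m ∈ f.support, ε ^ (4 * m 0 + 2 * m 1 + m 2 + 3 * m 3) = cH⁻¹ := by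
    intro m hm
    have h2 := congrArg (MvPolynomial.coeff m) hHf
    rw [hH, substM_diagonal, coeff_scaleX, MvPolynomial.coeff_smul, smul_eq_mul] at h2
    have hc0 : MvPolynomial.coeff m f ≠ 0 := MvPolynomial.mem_support_iff.mp hm
    have h3 : (∏ i : Fin 4, (![ε ^ 4, ε ^ 2, ε, ε ^ 3] i) ^ m i)
        = ε ^ (4 * m 0 + 2 * m 1 + m 2 + 3 * m 3) := by
      rw [Fin.prod_univ_four]
      simp only [Matrix.cons_val_zero, Matrix.cons_val_one, Matrix.head_cons,
        Matrix.cons_val_two, Matrix.tail_cons, Matrix.cons_val_three]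
      rw [← pow_mul, ← pow_mul, ← pow_mul, ← pow_add, ← pow_add, ← pow_add]
    rw [h3] at h2
    exact mul_right_cancel₀ hc0 h2
  have hmod : ∀ m ∈ f.support, ∀ m' ∈ f.support,
      (4 * m 0 + 2 * m 1 + m 2 + 3 * m 3) % 5 = (4 * m' 0 + 2 * m' 1 + m' 2 + 3 * m' 3) % 5 := by
    intro m hm m' hm'
    have e1 := hkey m hm
    have e2 := hkey m' hm'
    set a := 4 * m 0 + 2 * m 1 + m 2 + 3 * m 3
    set b := 4 * m' 0 + 2 * m' 1 + m' 2 + 3 * m' 3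
    have hpow : ε ^ (a + 4 * b) = 1 := by
      rw [pow_add, e1, show 4 * b = b * 4 from Nat.mul_comm 4 b, pow_mul, e2, ← e1,
        ← pow_mul, ← pow_add, show a + a * 4 = 5 * a by ring, pow_mul, hε5, one_pow]
    have hdvd := orderOf_dvd_of_pow_eq_one hpow
    rw [horder] at hdvd
    omega
  have hdeg : ∀ m ∈ f.support, m 0 + m 1 + m 2 + m 3 = 3 := fun m hm => hdeg_of_mem hf hm
  -- trivial case: f = 0
  by_cases hf0 : f = 0
  · exact ⟨0, by rw [hf0, zero_smul]⟩
  -- pick m₀ in the support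
  have hsne : f.support.Nonempty := by
    rw [Finset.nonempty_iff_ne_empty]
    intro h
    exact hf0 (MvPolynomial.support_eq_empty.mp h)
  obtain ⟨m0, hm0⟩ := hsne
  -- I matrix facts
  have hs0 : (5 + 5 * α : ℂ) ≠ 0 := by
    intro h
    have hα1 : α = -1 := by linear_combination h / 5
    rw [hα1] at ha2
    norm_num at ha2
  have hII : I * I = (5 + 5 * α) • (1 : Matrix (Fin 4) (Fin 4) ℂ) := by
    rw [hI]
    ext i j
    fin_cases i <;> fin_cases j <;>
      simp [Matrix.mul_apply, Fin.sum_univ_four, Matrix.smul_apply, Matrix.one_apply] <;>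
      first
        | ring1
        | linear_combination (α ^ 2 + α + 4) * ha2
        | linear_combination (-α ^ 2 - α - 4) * ha2
  have hIinv : I⁻¹ = (5 + 5 * α)⁻¹ • I := by
    apply Matrix.inv_eq_right_inv
    rw [mul_smul_comm, hII, smul_smul, inv_mul_cancel₀ hs0, one_smul]
  have hIinvI : I⁻¹ * I = 1 := by
    rw [hIinv, Matrix.smul_mul, hII, smul_smul, inv_mul_cancel₀ hs0, one_smul]
  obtain ⟨cI, hcI0, hcI⟩ := hinvI
  have hIf : substM I f = cI⁻¹ • f := by
    have h1 := congrArg (substM I) hcI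
    rw [substM_substM, hIinvI, substM_one, substM_smul] at h1
    conv_rhs => rw [h1]
    rw [inv_smul_smul₀ hcI0]
  set cc := cI⁻¹ with hccdef
  -- the square of cc
  have hscale : substM ((5 + 5 * α) • (1 : Matrix (Fin 4) (Fin 4) ℂ)) f = (5 + 5 * α) ^ 3 • f := by
    have hd : ((5 + 5 * α) • (1 : Matrix (Fin 4) (Fin 4) ℂ))
        = Matrix.diagonal (fun _ => (5 + 5 * α : ℂ)) := by
      rw [← Matrix.diagonal_one, ← Matrix.diagonal_smul]
      exact congrArg Matrix.diagonal (funext fun _ => by simp)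
    rw [hd, substM_diagonal]
    apply MvPolynomial.ext
    intro m
    rw [coeff_scaleX, MvPolynomial.coeff_smul, smul_eq_mul]
    by_cases hm : MvPolynomial.coeff m f = 0
    · rw [hm, mul_zero, mul_zero]
    · have h3 := hdeg m (MvPolynomial.mem_support_iff.mpr hm)
      rw [Fin.prod_univ_four, ← pow_add, ← pow_add, ← pow_add, h3]
  have hcc2 : cc ^ 2 = (5 + 5 * α) ^ 3 := by
    have h1 := congrArg (substM I) hIf
    rw [substM_substM, hII, hscale, substM_smul, hIf, smul_smul] at h1
    have h2 := congrArg (MvPolynomial.coeff m0) h1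
    rw [MvPolynomial.coeff_smul, MvPolynomial.coeff_smul, smul_eq_mul, smul_eq_mul] at h2
    have hc0 : MvPolynomial.coeff m0 f ≠ 0 := MvPolynomial.mem_support_iff.mp hm0
    have := mul_right_cancel₀ hc0 h2.symm
    linear_combination this
  have hu : (cc - (5 * α ^ 3 - 10 * α ^ 4)) * (cc + (5 * α ^ 3 - 10 * α ^ 4)) = 0 := by
    linear_combination hcc2 + ((-125) + (-250) * α + (-250) * α^2 + (-125) * α^3 + (-125) * α^4 + (-100) * α^6) * ha2
  have hkcases : (4 * m0 0 + 2 * m0 1 + m0 2 + 3 * m0 3) % 5 = 0 ∨ (4 * m0 0 + 2 * m0 1 + m0 2 + 3 * m0 3) % 5 = 1 ∨ (4 * m0 0 + 2 * m0 1 + m0 2 + 3 * m0 3) % 5 = 2 ∨ (4 * m0 0 + 2 * m0 1 + m0 2 + 3 * m0 3) % 5 = 3 ∨ (4 * m0 0 + 2 * m0 1 + m0 2 + 3 * m0 3) % 5 = 4 := by omega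
  rcases hkcases with hk | hk | hk | hk | hk
  · -- class 0
    have hsub : f.support ⊆ ({ee 0 0 2 1, ee 0 2 1 0, ee 1 0 0 2, ee 2 1 0 0} : Finset (Fin 4 →₀ ℕ)) := by
      intro m hm
      have hd3 := hdeg m hm
      have hw5 := (hmod m hm m0 hm0).trans hk
      have hca := classEnum0 (m 0) (m 1) (m 2) (m 3) hd3 hw5
      simp only [Finset.mem_insert, Finset.mem_singleton]
      rcases hca with ⟨w0, w1, w2, w3⟩ | ⟨w0, w1, w2, w3⟩ | ⟨w0, w1, w2, w3⟩ | ⟨w0, w1, w2, w3⟩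
      · left; rw [eq_ee m, w0, w1, w2, w3]
      · right; left; rw [eq_ee m, w0, w1, w2, w3]
      · right; right; left; rw [eq_ee m, w0, w1, w2, w3]
      · right; right; right; rw [eq_ee m, w0, w1, w2, w3]
    set t0 := MvPolynomial.coeff (ee 0 0 2 1) f with ht0def
    set t1 := MvPolynomial.coeff (ee 0 2 1 0) f with ht1def
    set t2 := MvPolynomial.coeff (ee 1 0 0 2) f with ht2def
    set t3 := MvPolynomial.coeff (ee 2 1 0 0) f with ht3def
    clear_value t0 t1 t2 t3
    have hne1 : ee 0 0 2 1 ∉ ({ee 0 2 1 0, ee 1 0 0 2, ee 2 1 0 0} : Finset (Fin 4 →₀ ℕ)) := by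
      simp [Finset.mem_insert, Finset.mem_singleton, ee_inj]
    have hne2 : ee 0 2 1 0 ∉ ({ee 1 0 0 2, ee 2 1 0 0} : Finset (Fin 4 →₀ ℕ)) := by
      simp [Finset.mem_insert, Finset.mem_singleton, ee_inj]
    have hne3 : ee 1 0 0 2 ∉ ({ee 2 1 0 0} : Finset (Fin 4 →₀ ℕ)) := by
      simp [Finset.mem_singleton, ee_inj]
    have hdecomp : f = C t0 * X 0 ^ 0 * X 1 ^ 0 * X 2 ^ 2 * X 3 ^ 1 + C t1 * X 0 ^ 0 * X 1 ^ 2 * X 2 ^ 1 * X 3 ^ 0 + C t2 * X 0 ^ 1 * X 1 ^ 0 * X 2 ^ 0 * X 3 ^ 2 + C t3 * X 0 ^ 2 * X 1 ^ 1 * X 2 ^ 0 * X 3 ^ 0 := by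
      have h1 : f = ∑ m ∈ ({ee 0 0 2 1, ee 0 2 1 0, ee 1 0 0 2, ee 2 1 0 0} : Finset (Fin 4 →₀ ℕ)), (monomial m) (MvPolynomial.coeff m f) :=
        (MvPolynomial.as_sum f).trans (Finset.sum_subset hsub (fun x _ hx => by
          rw [MvPolynomial.notMem_support_iff.mp hx, map_zero]))
      rw [h1, Finset.sum_insert hne1, Finset.sum_insert hne2, Finset.sum_insert hne3,
        Finset.sum_singleton, mon_eq, mon_eq, mon_eq, mon_eq, ← ht0def, ← ht1def, ← ht2def, ← ht3def]
      ring
    have hq0 : t0 * ((-1) * α ^ 5) + t1 * (1 * α ^ 4) + t2 * (1 * α ^ 2) + t3 * (1 * α) = cc * (t0 * 0 + t1 * 0 + t2 * 0 + t3 * 0) := by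
      have hqq := congrArg (eval ![(1 : ℂ), 0, 0, 0]) hIf
      rw [substM_eval, MvPolynomial.smul_eq_C_mul, hdecomp, hI] at hqq
      simp only [map_add, _root_.map_mul, map_pow, eval_add, eval_mul, eval_pow, eval_C, eval_X, Matrix.mulVec, dotProduct, Fin.sum_univ_four, Matrix.cons_val_zero, Matrix.cons_val_one, Matrix.head_cons, Matrix.cons_val_two, Matrix.tail_cons, Matrix.cons_val_three, Matrix.of_apply, Matrix.cons_val', Matrix.empty_val', Matrix.cons_val_fin_one, Matrix.head_fin_const] at hqq
      linear_combination hqq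
    have hq1 : t0 * (1 * α ^ 2) + t1 * ((-1) * α ^ 5) + t2 * (1 * α) + t3 * (1 * α ^ 4) = cc * (t0 * 0 + t1 * 0 + t2 * 0 + t3 * 0) := by
      have hqq := congrArg (eval ![(0 : ℂ), 1, 0, 0]) hIf
      rw [substM_eval, MvPolynomial.smul_eq_C_mul, hdecomp, hI] at hqq
      simp only [map_add, _root_.map_mul, map_pow, eval_add, eval_mul, eval_pow, eval_C, eval_X, Matrix.mulVec, dotProduct, Fin.sum_univ_four, Matrix.cons_val_zero, Matrix.cons_val_one, Matrix.head_cons, Matrix.cons_val_two, Matrix.tail_cons, Matrix.cons_val_three, Matrix.of_apply, Matrix.cons_val', Matrix.empty_val', Matrix.cons_val_fin_one, Matrix.head_fin_const] at hqq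
      linear_combination hqq
    have hq2 : t0 * (1 * α) + t1 * (1 * α ^ 2) + t2 * (1 * α ^ 4) + t3 * ((-1) * α ^ 5) = cc * (t0 * 0 + t1 * 0 + t2 * 0 + t3 * 0) := by
      have hqq := congrArg (eval ![(0 : ℂ), 0, 1, 0]) hIf
      rw [substM_eval, MvPolynomial.smul_eq_C_mul, hdecomp, hI] at hqq
      simp only [map_add, _root_.map_mul, map_pow, eval_add, eval_mul, eval_pow, eval_C, eval_X, Matrix.mulVec, dotProduct, Fin.sum_univ_four, Matrix.cons_val_zero, Matrix.cons_val_one, Matrix.head_cons, Matrix.cons_val_two, Matrix.tail_cons, Matrix.cons_val_three, Matrix.of_apply, Matrix.cons_val', Matrix.empty_val', Matrix.cons_val_fin_one, Matrix.head_fin_const] at hqq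
      linear_combination hqq
    have hq3 : t0 * (1 * α ^ 2 + (-3) * α ^ 3 + 3 * α ^ 4 + (-1) * α ^ 5) + t1 * ((-1) * α ^ 3 + (-1) * α ^ 4 + 1 * α ^ 5 + 1 * α ^ 6) + t2 * (1 + (-1) * α + (-1) * α ^ 2 + 1 * α ^ 3) + t3 * (1 * α + 3 * α ^ 2 + 3 * α ^ 3 + 1 * α ^ 4) = cc * (t0 * 0 + t1 * 0 + t2 * 0 + t3 * 1) := by
      have hqq := congrArg (eval ![(1 : ℂ), 1, 0, 0]) hIf
      rw [substM_eval, MvPolynomial.smul_eq_C_mul, hdecomp, hI] at hqq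
      simp only [map_add, _root_.map_mul, map_pow, eval_add, eval_mul, eval_pow, eval_C, eval_X, Matrix.mulVec, dotProduct, Fin.sum_univ_four, Matrix.cons_val_zero, Matrix.cons_val_one, Matrix.head_cons, Matrix.cons_val_two, Matrix.tail_cons, Matrix.cons_val_three, Matrix.of_apply, Matrix.cons_val', Matrix.empty_val', Matrix.cons_val_fin_one, Matrix.head_fin_const] at hqq
      linear_combination hqq
    rcases mul_eq_zero.mp hu with hsgn' | hsgn'
    · have hsgn : cc = 5 * α ^ 3 - 10 * α ^ 4 := by linear_combination hsgn'
      have he0 : t0 = 0 := by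
        linear_combination ((31/50) + (-11/25) * α) * hq0 + ((13/25) + (-17/50) * α) * hq1 + ((-19/50) + (13/50) * α) * hq2 + ((7/50) + (-2/25) * α) * hq3 + (((7/50) + (-2/25) * α) * t3) * hsgn + (((-1) + (31/50) * α + (-7/10) * α ^ 2 + (12/25) * α ^ 3 + (-13/25) * α ^ 4) * t0 + ((-19/50) * α ^ 2 + (1/2) * α ^ 3 + (-8/25) * α ^ 4 + (2/25) * α ^ 5) * t1 + ((7/50) + (4/25) * α + (1/5) * α ^ 2 + (-13/50) * α ^ 3) * t2 + ((19/25) * α + (-43/50) * α ^ 2 + (11/10) * α ^ 3 + (13/50) * α ^ 4) * t3) * ha2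
      have he1 : t1 = 0 := by
        linear_combination ((51/50) + (-16/25) * α) * hq0 + ((28/25) + (-37/50) * α) * hq1 + ((61/50) + (-37/50) * α) * hq2 + ((7/50) + (-2/25) * α) * hq3 + (((7/50) + (-2/25) * α) * t3) * hsgn + (((61/50) * α + (-7/10) * α ^ 2 + (17/25) * α ^ 3 + (-18/25) * α ^ 4) * t0 + ((-1) + 1 * α + (-39/50) * α ^ 2 + (9/10) * α ^ 3 + (-18/25) * α ^ 4 + (2/25) * α ^ 5) * t1 + ((7/50) + (19/25) * α + (-2/5) * α ^ 2 + (37/50) * α ^ 3) * t2 + ((29/25) * α + (-73/50) * α ^ 2 + (21/10) * α ^ 3 + (-37/50) * α ^ 4) * t3) * ha2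
      have he2 : t2 = 0 := by
        linear_combination ((21/50) + (-6/25) * α) * hq0 + ((-17/25) + (23/50) * α) * hq1 + ((1/50) + (3/50) * α) * hq2 + ((7/50) + (-2/25) * α) * hq3 + (((7/50) + (-2/25) * α) * t3) * hsgn + (((1/50) * α + (-1/2) * α ^ 2 + (12/25) * α ^ 3 + (-8/25) * α ^ 4) * t0 + ((1/50) * α ^ 2 + (-1/10) * α ^ 3 + (12/25) * α ^ 4 + (2/25) * α ^ 5) * t1 + ((-43/50) + (-1/25) * α + (-3/50) * α ^ 3) * t2 + ((14/25) * α + (-23/50) * α ^ 2 + (1/2) * α ^ 3 + (3/50) * α ^ 4) * t3) * ha2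
      have he3 : t3 = 0 := by
        linear_combination ((-29/50) + (9/25) * α) * hq0 + ((-2/25) + (3/50) * α) * hq1 + ((11/50) + (-7/50) * α) * hq2 + ((7/50) + (-2/25) * α) * hq3 + (((7/50) + (-2/25) * α) * t3) * hsgn + (((11/50) * α + (-3/10) * α ^ 2 + (2/25) * α ^ 3 + (7/25) * α ^ 4) * t0 + ((11/50) * α ^ 2 + (-1/2) * α ^ 3 + (2/25) * α ^ 4 + (2/25) * α ^ 5) * t1 + ((7/50) + (-11/25) * α + (7/50) * α ^ 3) * t2 + ((-1) + (14/25) * α + (-43/50) * α ^ 2 + (9/10) * α ^ 3 + (-7/50) * α ^ 4) * t3) * ha2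
      refine ⟨0, ?_⟩
      rw [hdecomp, he0, he1, he2, he3, zero_smul]
      simp
    · have hsgn : cc = -(5 * α ^ 3 - 10 * α ^ 4) := by linear_combination hsgn'
      have he0 : t0 = t3 := by
        linear_combination ((6/5) + (-4/5) * α) * hq0 + ((3/5) + (-2/5) * α) * hq1 + ((-3/5) + (2/5) * α) * hq2 + (((-1) + (2/5) * α + (-2/5) * α ^ 2 + (2/5) * α ^ 3 + (-4/5) * α ^ 4) * t0 + ((-3/5) * α ^ 2 + 1 * α ^ 3 + (-2/5) * α ^ 4) * t1 + ((3/5) * α + (1/5) * α ^ 2 + (-2/5) * α ^ 3) * t2 + (1 + (1/5) * α + (1/5) * α ^ 3 + (2/5) * α ^ 4) * t3) * ha2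
      have he1 : t1 = t3 := by
        linear_combination ((8/5) + (-1) * α) * hq0 + ((6/5) + (-4/5) * α) * hq1 + (1 + (-3/5) * α) * hq2 + ((1 * α + (-2/5) * α ^ 2 + (3/5) * α ^ 3 + (-1) * α ^ 4) * t0 + ((-1) + 1 * α + (-1) * α ^ 2 + (7/5) * α ^ 3 + (-4/5) * α ^ 4) * t1 + ((6/5) * α + (-2/5) * α ^ 2 + (3/5) * α ^ 3) * t2 + (1 + (3/5) * α + (-3/5) * α ^ 2 + (6/5) * α ^ 3 + (-3/5) * α ^ 4) * t3) * ha2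
      have he2 : t2 = t3 := by
        linear_combination (1 + (-3/5) * α) * hq0 + ((-3/5) + (2/5) * α) * hq1 + ((-1/5) + (1/5) * α) * hq2 + (((-1/5) * α + (-1/5) * α ^ 2 + (2/5) * α ^ 3 + (-3/5) * α ^ 4) * t0 + ((-1/5) * α ^ 2 + (2/5) * α ^ 3 + (2/5) * α ^ 4) * t1 + ((-1) + (2/5) * α + (-1/5) * α ^ 3) * t2 + (1 + (2/5) * α ^ 2 + (-2/5) * α ^ 3 + (1/5) * α ^ 4) * t3) * ha2
      refine ⟨t3, ?_⟩
      rw [hdecomp, he0, he1, he2, MvPolynomial.smul_eq_C_mul]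
      ring
  · -- class 1
    have hsub : f.support ⊆ ({ee 0 1 1 1, ee 0 3 0 0, ee 1 0 2 0, ee 2 0 0 1} : Finset (Fin 4 →₀ ℕ)) := by
      intro m hm
      have hd3 := hdeg m hm
      have hw5 := (hmod m hm m0 hm0).trans hk
      have hca := classEnum1 (m 0) (m 1) (m 2) (m 3) hd3 hw5
      simp only [Finset.mem_insert, Finset.mem_singleton]
      rcases hca with ⟨w0, w1, w2, w3⟩ | ⟨w0, w1, w2, w3⟩ | ⟨w0, w1, w2, w3⟩ | ⟨w0, w1, w2, w3⟩
      · left; rw [eq_ee m, w0, w1, w2, w3]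
      · right; left; rw [eq_ee m, w0, w1, w2, w3]
      · right; right; left; rw [eq_ee m, w0, w1, w2, w3]
      · right; right; right; rw [eq_ee m, w0, w1, w2, w3]
    set t0 := MvPolynomial.coeff (ee 0 1 1 1) f with ht0def
    set t1 := MvPolynomial.coeff (ee 0 3 0 0) f with ht1def
    set t2 := MvPolynomial.coeff (ee 1 0 2 0) f with ht2def
    set t3 := MvPolynomial.coeff (ee 2 0 0 1) f with ht3def
    clear_value t0 t1 t2 t3
    have hne1 : ee 0 1 1 1 ∉ ({ee 0 3 0 0, ee 1 0 2 0, ee 2 0 0 1} : Finset (Fin 4 →₀ ℕ)) := by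
      simp [Finset.mem_insert, Finset.mem_singleton, ee_inj]
    have hne2 : ee 0 3 0 0 ∉ ({ee 1 0 2 0, ee 2 0 0 1} : Finset (Fin 4 →₀ ℕ)) := by
      simp [Finset.mem_insert, Finset.mem_singleton, ee_inj]
    have hne3 : ee 1 0 2 0 ∉ ({ee 2 0 0 1} : Finset (Fin 4 →₀ ℕ)) := by
      simp [Finset.mem_singleton, ee_inj]
    have hdecomp : f = C t0 * X 0 ^ 0 * X 1 ^ 1 * X 2 ^ 1 * X 3 ^ 1 + C t1 * X 0 ^ 0 * X 1 ^ 3 * X 2 ^ 0 * X 3 ^ 0 + C t2 * X 0 ^ 1 * X 1 ^ 0 * X 2 ^ 2 * X 3 ^ 0 + C t3 * X 0 ^ 2 * X 1 ^ 0 * X 2 ^ 0 * X 3 ^ 1 := by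
      have h1 : f = ∑ m ∈ ({ee 0 1 1 1, ee 0 3 0 0, ee 1 0 2 0, ee 2 0 0 1} : Finset (Fin 4 →₀ ℕ)), (monomial m) (MvPolynomial.coeff m f) :=
        (MvPolynomial.as_sum f).trans (Finset.sum_subset hsub (fun x _ hx => by
          rw [MvPolynomial.notMem_support_iff.mp hx, map_zero]))
      rw [h1, Finset.sum_insert hne1, Finset.sum_insert hne2, Finset.sum_insert hne3,
        Finset.sum_singleton, mon_eq, mon_eq, mon_eq, mon_eq, ← ht0def, ← ht1def, ← ht2def, ← ht3def]
      ring
    have hq0 : t0 * ((-1) * α ^ 4) + t1 * (1 * α ^ 3) + t2 * (1 * α ^ 4) + t3 * ((-1) * α) = cc * (t0 * 0 + t1 * 0 + t2 * 0 + t3 * 0) := by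
      have hqq := congrArg (eval ![(1 : ℂ), 0, 0, 0]) hIf
      rw [substM_eval, MvPolynomial.smul_eq_C_mul, hdecomp, hI] at hqq
      simp only [map_add, _root_.map_mul, map_pow, eval_add, eval_mul, eval_pow, eval_C, eval_X, Matrix.mulVec, dotProduct, Fin.sum_univ_four, Matrix.cons_val_zero, Matrix.cons_val_one, Matrix.head_cons, Matrix.cons_val_two, Matrix.tail_cons, Matrix.cons_val_three, Matrix.of_apply, Matrix.cons_val', Matrix.empty_val', Matrix.cons_val_fin_one, Matrix.head_fin_const] at hqq
      linear_combination hqq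
    have hq1 : t0 * ((-1) * α ^ 3) + t1 * (1 * α ^ 6) + t2 * (1 * α ^ 3) + t3 * (1 * α ^ 2) = cc * (t0 * 0 + t1 * 1 + t2 * 0 + t3 * 0) := by
      have hqq := congrArg (eval ![(0 : ℂ), 1, 0, 0]) hIf
      rw [substM_eval, MvPolynomial.smul_eq_C_mul, hdecomp, hI] at hqq
      simp only [map_add, _root_.map_mul, map_pow, eval_add, eval_mul, eval_pow, eval_C, eval_X, Matrix.mulVec, dotProduct, Fin.sum_univ_four, Matrix.cons_val_zero, Matrix.cons_val_one, Matrix.head_cons, Matrix.cons_val_two, Matrix.tail_cons, Matrix.cons_val_three, Matrix.of_apply, Matrix.cons_val', Matrix.empty_val', Matrix.cons_val_fin_one, Matrix.head_fin_const] at hqq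
      linear_combination hqq
    have hq2 : t0 * ((-1) * α ^ 2) + t1 * ((-1) * α ^ 3) + t2 * (1 * α ^ 2) + t3 * (1 * α ^ 5) = cc * (t0 * 0 + t1 * 0 + t2 * 0 + t3 * 0) := by
      have hqq := congrArg (eval ![(0 : ℂ), 0, 1, 0]) hIf
      rw [substM_eval, MvPolynomial.smul_eq_C_mul, hdecomp, hI] at hqq
      simp only [map_add, _root_.map_mul, map_pow, eval_add, eval_mul, eval_pow, eval_C, eval_X, Matrix.mulVec, dotProduct, Fin.sum_univ_four, Matrix.cons_val_zero, Matrix.cons_val_one, Matrix.head_cons, Matrix.cons_val_two, Matrix.tail_cons, Matrix.cons_val_three, Matrix.of_apply, Matrix.cons_val', Matrix.empty_val', Matrix.cons_val_fin_one, Matrix.head_fin_const] at hqq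
      linear_combination hqq
    have hq3 : t0 * (1 * α ^ 2 + (-1) * α ^ 3 + 1 * α ^ 4) + t1 * (1 * α ^ 6) + t2 * (1 + (-1) * α + 2 * α ^ 2 + (-1) * α ^ 3 + 2 * α ^ 4 + (-1) * α ^ 5 + 1 * α ^ 6) + t3 * (1 + 2 * α + 3 * α ^ 2 + 2 * α ^ 3 + 1 * α ^ 4) = cc * (t0 * 0 + t1 * 1 + t2 * 1 + t3 * 0) := by
      have hqq := congrArg (eval ![(1 : ℂ), 1, 1, 0]) hIf
      rw [substM_eval, MvPolynomial.smul_eq_C_mul, hdecomp, hI] at hqq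
      simp only [map_add, _root_.map_mul, map_pow, eval_add, eval_mul, eval_pow, eval_C, eval_X, Matrix.mulVec, dotProduct, Fin.sum_univ_four, Matrix.cons_val_zero, Matrix.cons_val_one, Matrix.head_cons, Matrix.cons_val_two, Matrix.tail_cons, Matrix.cons_val_three, Matrix.of_apply, Matrix.cons_val', Matrix.empty_val', Matrix.cons_val_fin_one, Matrix.head_fin_const] at hqq
      linear_combination hqq
    rcases mul_eq_zero.mp hu with hsgn' | hsgn'
    · have hsgn : cc = 5 * α ^ 3 - 10 * α ^ 4 := by linear_combination hsgn'
      have he0 : t0 = 0 := by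
        linear_combination ((-1058/2945) + (451/2945) * α) * hq0 + ((-23/2945) + (-3/2945) * α) * hq1 + ((-242/155) + (29/31) * α) * hq2 + ((11/95) + (-6/95) * α) * hq3 + (((318/2945) + (-189/2945) * α) * t1 + ((11/95) + (-6/95) * α) * t2) * hsgn + (((-1) + 1 * α + (-951/2945) * α ^ 2 + (637/2945) * α ^ 3) * t0 + ((390/589) * α ^ 3 + (-129/2945) * α ^ 4 + (189/2945) * α ^ 5) * t1 + ((11/95) + (-28/95) * α + (-2521/2945) * α ^ 2 + (1967/2945) * α ^ 3 + (-11/95) * α ^ 4 + (6/95) * α ^ 5) * t2 + ((11/95) + (1213/2945) * α + (-139/589) * α ^ 2 + (2029/2945) * α ^ 3 + (-29/31) * α ^ 4) * t3) * ha2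
      have he1 : t1 = 0 := by
        linear_combination ((-19/155) + (11/155) * α) * hq0 + ((38/155) + (-22/155) * α) * hq1 + ((6/31) + (-19/155) * α) * hq2 + (((38/155) + (-22/155) * α) * t1) * hsgn + (((-6/31) * α ^ 2 + (11/155) * α ^ 3) * t0 + ((-1) + 1 * α + (-2) * α ^ 2 + (226/155) * α ^ 3 + (-16/155) * α ^ 4 + (22/155) * α ^ 5) * t1 + ((6/31) * α ^ 2 + (-11/155) * α ^ 3) * t2 + ((19/155) * α + (8/155) * α ^ 2 + (-11/155) * α ^ 3 + (19/155) * α ^ 4) * t3) * ha2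
      have he2 : t2 = 0 := by
        linear_combination ((6/2945) + (52/2945) * α) * hq0 + ((-384/2945) + (206/2945) * α) * hq1 + ((22/155) + (-16/155) * α) * hq2 + ((11/95) + (-6/95) * α) * hq3 + (((-43/2945) + (4/589) * α) * t1 + ((11/95) + (-6/95) * α) * t2) * hsgn + (((-77/2945) * α ^ 2 + (238/2945) * α ^ 3) * t0 + ((-197/2945) * α ^ 3 + (23/2945) * α ^ 4 + (-4/589) * α ^ 5) * t1 + ((-84/95) + (67/95) * α + (-679/589) * α ^ 2 + (2366/2945) * α ^ 3 + (-11/95) * α ^ 4 + (6/95) * α ^ 5) * t2 + ((11/95) + (149/2945) * α + (407/2945) * α ^ 2 + (72/2945) * α ^ 3 + (16/155) * α ^ 4) * t3) * ha2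
      have he3 : t3 = 0 := by
        linear_combination ((161/155) + (-103/155) * α) * hq0 + ((19/155) + (-11/155) * α) * hq1 + ((-47/155) + (37/155) * α) * hq2 + (((19/155) + (-11/155) * α) * t1) * hsgn + (((47/155) * α ^ 2 + (-103/155) * α ^ 3) * t0 + ((113/155) * α ^ 3 + (-8/155) * α ^ 4 + (11/155) * α ^ 5) * t1 + ((-47/155) * α ^ 2 + (103/155) * α ^ 3) * t2 + ((-1) + (-6/155) * α + (-27/155) * α ^ 2 + (2/31) * α ^ 3 + (-37/155) * α ^ 4) * t3) * ha2
      refine ⟨0, ?_⟩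
      rw [hdecomp, he0, he1, he2, he3, zero_smul]
      simp
    · have hsgn : cc = -(5 * α ^ 3 - 10 * α ^ 4) := by linear_combination hsgn'
      have he0 : t0 = 0 := by
        linear_combination ((-4/11) + (1/11) * α) * hq0 + ((-37/55) + (23/55) * α) * hq1 + ((-52/55) + (7/11) * α) * hq2 + ((3/5) + (-2/5) * α) * hq3 + (((-4/55) + (1/55) * α) * t1 + ((3/5) + (-2/5) * α) * t2) * hsgn + (((-1) + 1 * α + (-5/11) * α ^ 2 + (27/55) * α ^ 3) * t0 + ((12/55) * α ^ 3 + (3/55) * α ^ 4 + (-1/55) * α ^ 5) * t1 + ((3/5) + (-8/5) * α + (157/55) * α ^ 2 + (-159/55) * α ^ 3 + (-3/5) * α ^ 4 + (2/5) * α ^ 5) * t2 + ((3/5) + (31/55) * α + (3/11) * α ^ 2 + (39/55) * α ^ 3 + (-7/11) * α ^ 4) * t3) * ha2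
      have he1 : t1 = 0 := by
        linear_combination ((9/55) + (-1/11) * α) * hq0 + ((-18/55) + (2/11) * α) * hq1 + ((-14/55) + (9/55) * α) * hq2 + (((-18/55) + (2/11) * α) * t1) * hsgn + (((14/55) * α ^ 2 + (-1/11) * α ^ 3) * t0 + ((-1) + 1 * α + (-2) * α ^ 2 + (98/55) * α ^ 3 + (8/55) * α ^ 4 + (-2/11) * α ^ 5) * t1 + ((-14/55) * α ^ 2 + (1/11) * α ^ 3) * t2 + ((-9/55) * α + (-4/55) * α ^ 2 + (1/11) * α ^ 3 + (-9/55) * α ^ 4) * t3) * ha2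
      have he2 : t2 = 0 := by
        linear_combination ((-8/55) + (2/55) * α) * hq0 + ((-28/55) + (18/55) * α) * hq1 + ((54/55) + (-6/11) * α) * hq2 + ((3/5) + (-2/5) * α) * hq3 + (((1/11) + (-4/55) * α) * t1 + ((3/5) + (-2/5) * α) * t2) * hsgn + (((-21/55) * α ^ 2 + (24/55) * α ^ 3) * t0 + ((-37/55) * α ^ 3 + (-1/55) * α ^ 4 + (4/55) * α ^ 5) * t1 + ((-2/5) + (-3/5) * α + (153/55) * α ^ 2 + (-156/55) * α ^ 3 + (-3/5) * α ^ 4 + (2/5) * α ^ 5) * t2 + ((3/5) + (19/55) * α + (39/55) * α ^ 2 + (-2/55) * α ^ 3 + (6/11) * α ^ 4) * t3) * ha2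
      have he3 : t3 = 0 := by
        linear_combination ((13/11) + (-41/55) * α) * hq0 + ((-9/55) + (1/11) * α) * hq1 + ((-29/55) + (21/55) * α) * hq2 + (((-9/55) + (1/11) * α) * t1) * hsgn + (((29/55) * α ^ 2 + (-41/55) * α ^ 3) * t0 + ((49/55) * α ^ 3 + (4/55) * α ^ 4 + (-1/11) * α ^ 5) * t1 + ((-29/55) * α ^ 2 + (41/55) * α ^ 3) * t2 + ((-1) + (-2/11) * α + (-13/55) * α ^ 2 + (8/55) * α ^ 3 + (-21/55) * α ^ 4) * t3) * ha2
      refine ⟨0, ?_⟩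
      rw [hdecomp, he0, he1, he2, he3, zero_smul]
      simp
  · -- class 2
    have hsub : f.support ⊆ ({ee 0 0 1 2, ee 0 2 0 1, ee 1 1 1 0, ee 3 0 0 0} : Finset (Fin 4 →₀ ℕ)) := by
      intro m hm
      have hd3 := hdeg m hm
      have hw5 := (hmod m hm m0 hm0).trans hk
      have hca := classEnum2 (m 0) (m 1) (m 2) (m 3) hd3 hw5
      simp only [Finset.mem_insert, Finset.mem_singleton]
      rcases hca with ⟨w0, w1, w2, w3⟩ | ⟨w0, w1, w2, w3⟩ | ⟨w0, w1, w2, w3⟩ | ⟨w0, w1, w2, w3⟩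
      · left; rw [eq_ee m, w0, w1, w2, w3]
      · right; left; rw [eq_ee m, w0, w1, w2, w3]
      · right; right; left; rw [eq_ee m, w0, w1, w2, w3]
      · right; right; right; rw [eq_ee m, w0, w1, w2, w3]
    set t0 := MvPolynomial.coeff (ee 0 0 1 2) f with ht0def
    set t1 := MvPolynomial.coeff (ee 0 2 0 1) f with ht1def
    set t2 := MvPolynomial.coeff (ee 1 1 1 0) f with ht2def
    set t3 := MvPolynomial.coeff (ee 3 0 0 0) f with ht3def
    clear_value t0 t1 t2 t3
    have hne1 : ee 0 0 1 2 ∉ ({ee 0 2 0 1, ee 1 1 1 0, ee 3 0 0 0} : Finset (Fin 4 →₀ ℕ)) := by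
      simp [Finset.mem_insert, Finset.mem_singleton, ee_inj]
    have hne2 : ee 0 2 0 1 ∉ ({ee 1 1 1 0, ee 3 0 0 0} : Finset (Fin 4 →₀ ℕ)) := by
      simp [Finset.mem_insert, Finset.mem_singleton, ee_inj]
    have hne3 : ee 1 1 1 0 ∉ ({ee 3 0 0 0} : Finset (Fin 4 →₀ ℕ)) := by
      simp [Finset.mem_singleton, ee_inj]
    have hdecomp : f = C t0 * X 0 ^ 0 * X 1 ^ 0 * X 2 ^ 1 * X 3 ^ 2 + C t1 * X 0 ^ 0 * X 1 ^ 2 * X 2 ^ 0 * X 3 ^ 1 + C t2 * X 0 ^ 1 * X 1 ^ 1 * X 2 ^ 1 * X 3 ^ 0 + C t3 * X 0 ^ 3 * X 1 ^ 0 * X 2 ^ 0 * X 3 ^ 0 := by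
      have h1 : f = ∑ m ∈ ({ee 0 0 1 2, ee 0 2 0 1, ee 1 1 1 0, ee 3 0 0 0} : Finset (Fin 4 →₀ ℕ)), (monomial m) (MvPolynomial.coeff m f) :=
        (MvPolynomial.as_sum f).trans (Finset.sum_subset hsub (fun x _ hx => by
          rw [MvPolynomial.notMem_support_iff.mp hx, map_zero]))
      rw [h1, Finset.sum_insert hne1, Finset.sum_insert hne2, Finset.sum_insert hne3,
        Finset.sum_singleton, mon_eq, mon_eq, mon_eq, mon_eq, ← ht0def, ← ht1def, ← ht2def, ← ht3def]
      ring
    have hq0 : t0 * (1 * α ^ 4) + t1 * ((-1) * α ^ 3) + t2 * (1 * α ^ 3) + t3 * (1) = cc * (t0 * 0 + t1 * 0 + t2 * 0 + t3 * 1) := by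
      have hqq := congrArg (eval ![(1 : ℂ), 0, 0, 0]) hIf
      rw [substM_eval, MvPolynomial.smul_eq_C_mul, hdecomp, hI] at hqq
      simp only [map_add, _root_.map_mul, map_pow, eval_add, eval_mul, eval_pow, eval_C, eval_X, Matrix.mulVec, dotProduct, Fin.sum_univ_four, Matrix.cons_val_zero, Matrix.cons_val_one, Matrix.head_cons, Matrix.cons_val_two, Matrix.tail_cons, Matrix.cons_val_three, Matrix.of_apply, Matrix.cons_val', Matrix.empty_val', Matrix.cons_val_fin_one, Matrix.head_fin_const] at hqq
      linear_combination hqq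
    have hq1 : t0 * ((-1) * α) + t1 * (1 * α ^ 4) + t2 * ((-1) * α ^ 4) + t3 * (1 * α ^ 3) = cc * (t0 * 0 + t1 * 0 + t2 * 0 + t3 * 0) := by
      have hqq := congrArg (eval ![(0 : ℂ), 1, 0, 0]) hIf
      rw [substM_eval, MvPolynomial.smul_eq_C_mul, hdecomp, hI] at hqq
      simp only [map_add, _root_.map_mul, map_pow, eval_add, eval_mul, eval_pow, eval_C, eval_X, Matrix.mulVec, dotProduct, Fin.sum_univ_four, Matrix.cons_val_zero, Matrix.cons_val_one, Matrix.head_cons, Matrix.cons_val_two, Matrix.tail_cons, Matrix.cons_val_three, Matrix.of_apply, Matrix.cons_val', Matrix.empty_val', Matrix.cons_val_fin_one, Matrix.head_fin_const] at hqq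
      linear_combination hqq
    have hq2 : t0 * (1 * α ^ 2) + t1 * (1 * α ^ 3) + t2 * ((-1) * α ^ 3) + t3 * (1 * α ^ 6) = cc * (t0 * 0 + t1 * 0 + t2 * 0 + t3 * 0) := by
      have hqq := congrArg (eval ![(0 : ℂ), 0, 1, 0]) hIf
      rw [substM_eval, MvPolynomial.smul_eq_C_mul, hdecomp, hI] at hqq
      simp only [map_add, _root_.map_mul, map_pow, eval_add, eval_mul, eval_pow, eval_C, eval_X, Matrix.mulVec, dotProduct, Fin.sum_univ_four, Matrix.cons_val_zero, Matrix.cons_val_one, Matrix.head_cons, Matrix.cons_val_two, Matrix.tail_cons, Matrix.cons_val_three, Matrix.of_apply, Matrix.cons_val', Matrix.empty_val', Matrix.cons_val_fin_one, Matrix.head_fin_const] at hqq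
      linear_combination hqq
    have hq3 : t0 * (1 + (-1) * α + 1 * α ^ 2) + t1 * (1 * α ^ 4) + t2 * (1 * α ^ 2 + 1 * α ^ 4 + 1 * α ^ 6) + t3 * (1 + 3 * α + 6 * α ^ 2 + 7 * α ^ 3 + 6 * α ^ 4 + 3 * α ^ 5 + 1 * α ^ 6) = cc * (t0 * 0 + t1 * 0 + t2 * 1 + t3 * 1) := by
      have hqq := congrArg (eval ![(1 : ℂ), 1, 1, 0]) hIf
      rw [substM_eval, MvPolynomial.smul_eq_C_mul, hdecomp, hI] at hqq
      simp only [map_add, _root_.map_mul, map_pow, eval_add, eval_mul, eval_pow, eval_C, eval_X, Matrix.mulVec, dotProduct, Fin.sum_univ_four, Matrix.cons_val_zero, Matrix.cons_val_one, Matrix.head_cons, Matrix.cons_val_two, Matrix.tail_cons, Matrix.cons_val_three, Matrix.of_apply, Matrix.cons_val', Matrix.empty_val', Matrix.cons_val_fin_one, Matrix.head_fin_const] at hqq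
      linear_combination hqq
    rcases mul_eq_zero.mp hu with hsgn' | hsgn'
    · have hsgn : cc = 5 * α ^ 3 - 10 * α ^ 4 := by linear_combination hsgn'
      have he0 : t0 = 0 := by
        linear_combination ((-1/10) * α) * hq0 + ((7/10) + (-7/10) * α) * hq1 + ((7/10) + (-1/10) * α) * hq2 + (((-1/10) * α) * t3) * hsgn + (((-1) + (3/10) * α + (1/10) * α ^ 2 + (1/10) * α ^ 3) * t0 + ((7/10) * α ^ 3) * t1 + ((-7/10) * α ^ 3) * t2 + ((-1/10) * α + (1/10) * α ^ 2 + (1/2) * α ^ 3 + (-3/5) * α ^ 4 + (1/10) * α ^ 5) * t3) * ha2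
      have he1 : t1 = 0 := by
        linear_combination ((-7/55) + (-1/110) * α) * hq0 + ((91/110) + (-13/22) * α) * hq1 + ((-53/22) + (183/110) * α) * hq2 + ((12/55) + (-7/55) * α) * hq3 + (((12/55) + (-7/55) * α) * t2 + ((1/11) + (-3/22) * α) * t3) * hsgn + (((12/55) + (-153/110) * α + (3/22) * α ^ 2 + (1/110) * α ^ 3) * t0 + ((-1) + 1 * α + (-2) * α ^ 2 + (79/110) * α ^ 3) * t1 + ((12/55) * α ^ 2 + (93/110) * α ^ 3 + (-1/11) * α ^ 4 + (7/55) * α ^ 5) * t2 + ((1/11) + (47/110) * α + (13/22) * α ^ 2 + (107/110) * α ^ 3 + (57/55) * α ^ 4 + (-169/110) * α ^ 5) * t3) * ha2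
      have he2 : t2 = 0 := by
        linear_combination ((-5/22) + (1/11) * α) * hq0 + ((-26/55) + (23/110) * α) * hq1 + ((-17/55) + (29/110) * α) * hq2 + ((12/55) + (-7/55) * α) * hq3 + (((12/55) + (-7/55) * α) * t2 + ((-1/110) + (-2/55) * α) * t3) * hsgn + (((12/55) + (-1/11) * α + (3/22) * α ^ 2 + (-1/11) * α ^ 3) * t0 + ((-9/110) * α ^ 3) * t1 + ((-1) + 1 * α + (-98/55) * α ^ 2 + (181/110) * α ^ 3 + (-1/11) * α ^ 4 + (7/55) * α ^ 5) * t2 + ((-1/110) + (69/110) * α + (16/55) * α ^ 2 + (37/55) * α ^ 3 + (37/110) * α ^ 4 + (-3/22) * α ^ 5) * t3) * ha2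
      have he3 : t3 = 0 := by
        linear_combination ((1/5) + (-1/10) * α) * hq0 + ((-1/10) + (1/10) * α) * hq1 + ((1/10) + (-1/10) * α) * hq2 + (((1/5) + (-1/10) * α) * t3) * hsgn + (((1/10) * α + (-1/10) * α ^ 2 + (1/10) * α ^ 3) * t0 + ((-1/10) * α ^ 3) * t1 + ((1/10) * α ^ 3) * t2 + ((-4/5) + (7/10) * α + (-3/2) * α ^ 2 + (11/10) * α ^ 3 + (1/10) * α ^ 5) * t3) * ha2
      refine ⟨0, ?_⟩
      rw [hdecomp, he0, he1, he2, he3, zero_smul]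
      simp
    · have hsgn : cc = -(5 * α ^ 3 - 10 * α ^ 4) := by linear_combination hsgn'
      have he0 : t0 = 0 := by
        linear_combination ((-1/10) + (1/10) * α) * hq0 + ((9/10) + (-3/5) * α) * hq1 + ((1/2) + (-1/5) * α) * hq2 + (((-1/10) + (1/10) * α) * t3) * hsgn + (((-1) + (1/10) * α + (-1/10) * α ^ 3) * t0 + ((3/5) * α ^ 3) * t1 + ((-3/5) * α ^ 3) * t2 + ((-1/10) + (1/5) * α + (-3/10) * α ^ 2 + (9/10) * α ^ 3 + (-3/10) * α ^ 4 + (1/5) * α ^ 5) * t3) * ha2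
      have he1 : t1 = 0 := by
        linear_combination ((1/10) + (-1/10) * α) * hq0 + ((23/10) + (-7/5) * α) * hq1 + ((-17/10) + (6/5) * α) * hq2 + ((-2/5) + (1/5) * α) * hq3 + (((-2/5) + (1/5) * α) * t2 + ((-3/10) + (1/10) * α) * t3) * hsgn + (((-2/5) + (-13/10) * α + (1/10) * α ^ 3) * t0 + ((-1) + 1 * α + (-2) * α ^ 2 + (6/5) * α ^ 3) * t1 + ((-2/5) * α ^ 2 + (2/5) * α ^ 3 + (1/5) * α ^ 4 + (-1/5) * α ^ 5) * t2 + ((-3/10) + (-4/5) * α + (-13/10) * α ^ 2 + (-3/10) * α ^ 3 + (1/10) * α ^ 4 + (-7/5) * α ^ 5) * t3) * ha2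
      have he2 : t2 = 0 := by
        linear_combination ((2/5) + (-3/10) * α) * hq0 + ((7/10) + (-1/2) * α) * hq1 + ((7/10) + (-3/10) * α) * hq2 + ((-2/5) + (1/5) * α) * hq3 + (((-2/5) + (1/5) * α) * t2 + ((-1/10) * α) * t3) * hsgn + (((-2/5) + (3/10) * α + (-1/10) * α ^ 2 + (3/10) * α ^ 3) * t0 + ((3/10) * α ^ 3) * t1 + ((-1) + 1 * α + (-12/5) * α ^ 2 + (13/10) * α ^ 3 + (1/5) * α ^ 4 + (-1/5) * α ^ 5) * t2 + ((-13/10) * α + (-1/2) * α ^ 2 + (-17/10) * α ^ 3 + (-4/5) * α ^ 4 + (1/10) * α ^ 5) * t3) * ha2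
      have he3 : t3 = 0 := by
        linear_combination ((-1/2) + (3/10) * α) * hq0 + ((3/10) + (-1/5) * α) * hq1 + ((-3/10) + (1/5) * α) * hq2 + (((-1/2) + (3/10) * α) * t3) * hsgn + (((-3/10) * α + (1/5) * α ^ 2 + (-3/10) * α ^ 3) * t0 + ((1/5) * α ^ 3) * t1 + ((-1/5) * α ^ 3) * t2 + ((-3/2) + (9/5) * α + (-33/10) * α ^ 2 + (29/10) * α ^ 3 + (1/10) * α ^ 4 + (-1/5) * α ^ 5) * t3) * ha2
      refine ⟨0, ?_⟩
      rw [hdecomp, he0, he1, he2, he3, zero_smul]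
      simp
  · -- class 3
    have hsub : f.support ⊆ ({ee 0 0 3 0, ee 0 1 0 2, ee 1 0 1 1, ee 1 2 0 0} : Finset (Fin 4 →₀ ℕ)) := by
      intro m hm
      have hd3 := hdeg m hm
      have hw5 := (hmod m hm m0 hm0).trans hk
      have hca := classEnum3 (m 0) (m 1) (m 2) (m 3) hd3 hw5
      simp only [Finset.mem_insert, Finset.mem_singleton]
      rcases hca with ⟨w0, w1, w2, w3⟩ | ⟨w0, w1, w2, w3⟩ | ⟨w0, w1, w2, w3⟩ | ⟨w0, w1, w2, w3⟩
      · left; rw [eq_ee m, w0, w1, w2, w3]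
      · right; left; rw [eq_ee m, w0, w1, w2, w3]
      · right; right; left; rw [eq_ee m, w0, w1, w2, w3]
      · right; right; right; rw [eq_ee m, w0, w1, w2, w3]
    set t0 := MvPolynomial.coeff (ee 0 0 3 0) f with ht0def
    set t1 := MvPolynomial.coeff (ee 0 1 0 2) f with ht1def
    set t2 := MvPolynomial.coeff (ee 1 0 1 1) f with ht2def
    set t3 := MvPolynomial.coeff (ee 1 2 0 0) f with ht3def
    clear_value t0 t1 t2 t3
    have hne1 : ee 0 0 3 0 ∉ ({ee 0 1 0 2, ee 1 0 1 1, ee 1 2 0 0} : Finset (Fin 4 →₀ ℕ)) := by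
      simp [Finset.mem_insert, Finset.mem_singleton, ee_inj]
    have hne2 : ee 0 1 0 2 ∉ ({ee 1 0 1 1, ee 1 2 0 0} : Finset (Fin 4 →₀ ℕ)) := by
      simp [Finset.mem_insert, Finset.mem_singleton, ee_inj]
    have hne3 : ee 1 0 1 1 ∉ ({ee 1 2 0 0} : Finset (Fin 4 →₀ ℕ)) := by
      simp [Finset.mem_singleton, ee_inj]
    have hdecomp : f = C t0 * X 0 ^ 0 * X 1 ^ 0 * X 2 ^ 3 * X 3 ^ 0 + C t1 * X 0 ^ 0 * X 1 ^ 1 * X 2 ^ 0 * X 3 ^ 2 + C t2 * X 0 ^ 1 * X 1 ^ 0 * X 2 ^ 1 * X 3 ^ 1 + C t3 * X 0 ^ 1 * X 1 ^ 2 * X 2 ^ 0 * X 3 ^ 0 := by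
      have h1 : f = ∑ m ∈ ({ee 0 0 3 0, ee 0 1 0 2, ee 1 0 1 1, ee 1 2 0 0} : Finset (Fin 4 →₀ ℕ)), (monomial m) (MvPolynomial.coeff m f) :=
        (MvPolynomial.as_sum f).trans (Finset.sum_subset hsub (fun x _ hx => by
          rw [MvPolynomial.notMem_support_iff.mp hx, map_zero]))
      rw [h1, Finset.sum_insert hne1, Finset.sum_insert hne2, Finset.sum_insert hne3,
        Finset.sum_singleton, mon_eq, mon_eq, mon_eq, mon_eq, ← ht0def, ← ht1def, ← ht2def, ← ht3def]
      ring
    have hq0 : t0 * (1 * α ^ 6) + t1 * (1 * α ^ 3) + t2 * ((-1) * α ^ 3) + t3 * (1 * α ^ 2) = cc * (t0 * 0 + t1 * 0 + t2 * 0 + t3 * 0) := by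
      have hqq := congrArg (eval ![(1 : ℂ), 0, 0, 0]) hIf
      rw [substM_eval, MvPolynomial.smul_eq_C_mul, hdecomp, hI] at hqq
      simp only [map_add, _root_.map_mul, map_pow, eval_add, eval_mul, eval_pow, eval_C, eval_X, Matrix.mulVec, dotProduct, Fin.sum_univ_four, Matrix.cons_val_zero, Matrix.cons_val_one, Matrix.head_cons, Matrix.cons_val_two, Matrix.tail_cons, Matrix.cons_val_three, Matrix.of_apply, Matrix.cons_val', Matrix.empty_val', Matrix.cons_val_fin_one, Matrix.head_fin_const] at hqq
      linear_combination hqq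
    have hq1 : t0 * ((-1) * α ^ 3) + t1 * (1 * α ^ 2) + t2 * ((-1) * α ^ 2) + t3 * (1 * α ^ 5) = cc * (t0 * 0 + t1 * 0 + t2 * 0 + t3 * 0) := by
      have hqq := congrArg (eval ![(0 : ℂ), 1, 0, 0]) hIf
      rw [substM_eval, MvPolynomial.smul_eq_C_mul, hdecomp, hI] at hqq
      simp only [map_add, _root_.map_mul, map_pow, eval_add, eval_mul, eval_pow, eval_C, eval_X, Matrix.mulVec, dotProduct, Fin.sum_univ_four, Matrix.cons_val_zero, Matrix.cons_val_one, Matrix.head_cons, Matrix.cons_val_two, Matrix.tail_cons, Matrix.cons_val_three, Matrix.of_apply, Matrix.cons_val', Matrix.empty_val', Matrix.cons_val_fin_one, Matrix.head_fin_const] at hqq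
      linear_combination hqq
    have hq2 : t0 * (1) + t1 * ((-1) * α ^ 3) + t2 * (1 * α ^ 3) + t3 * (1 * α ^ 4) = cc * (t0 * 1 + t1 * 0 + t2 * 0 + t3 * 0) := by
      have hqq := congrArg (eval ![(0 : ℂ), 0, 1, 0]) hIf
      rw [substM_eval, MvPolynomial.smul_eq_C_mul, hdecomp, hI] at hqq
      simp only [map_add, _root_.map_mul, map_pow, eval_add, eval_mul, eval_pow, eval_C, eval_X, Matrix.mulVec, dotProduct, Fin.sum_univ_four, Matrix.cons_val_zero, Matrix.cons_val_one, Matrix.head_cons, Matrix.cons_val_two, Matrix.tail_cons, Matrix.cons_val_three, Matrix.of_apply, Matrix.cons_val', Matrix.empty_val', Matrix.cons_val_fin_one, Matrix.head_fin_const] at hqq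
      linear_combination hqq
    have hq3 : t0 * (1 + (-3) * α + 6 * α ^ 2 + (-7) * α ^ 3 + 6 * α ^ 4 + (-3) * α ^ 5 + 1 * α ^ 6) + t1 * (1 * α ^ 2) + t2 * (1 + 1 * α ^ 2 + 1 * α ^ 4) + t3 * (1 * α ^ 4 + 1 * α ^ 5 + 1 * α ^ 6) = cc * (t0 * 1 + t1 * 0 + t2 * 0 + t3 * 1) := by
      have hqq := congrArg (eval ![(1 : ℂ), 1, 1, 0]) hIf
      rw [substM_eval, MvPolynomial.smul_eq_C_mul, hdecomp, hI] at hqq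
      simp only [map_add, _root_.map_mul, map_pow, eval_add, eval_mul, eval_pow, eval_C, eval_X, Matrix.mulVec, dotProduct, Fin.sum_univ_four, Matrix.cons_val_zero, Matrix.cons_val_one, Matrix.head_cons, Matrix.cons_val_two, Matrix.tail_cons, Matrix.cons_val_three, Matrix.of_apply, Matrix.cons_val', Matrix.empty_val', Matrix.cons_val_fin_one, Matrix.head_fin_const] at hqq
      linear_combination hqq
    rcases mul_eq_zero.mp hu with hsgn' | hsgn'
    · have hsgn : cc = 5 * α ^ 3 - 10 * α ^ 4 := by linear_combination hsgn'
      have he0 : t0 = 0 := by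
        linear_combination ((-7/55) + (1/11) * α) * hq0 + ((-12/55) + (7/55) * α) * hq1 + ((12/55) + (-7/55) * α) * hq2 + (((12/55) + (-7/55) * α) * t0) * hsgn + (((-43/55) + (36/55) * α + (-79/55) * α ^ 2 + (67/55) * α ^ 3 + (2/55) * α ^ 4 + (-1/11) * α ^ 5) * t0 + ((-12/55) * α ^ 2) * t1 + ((12/55) * α ^ 2) * t2 + ((-7/55) * α ^ 2 + (12/55) * α ^ 3 + (-7/55) * α ^ 4) * t3) * ha2
      have he1 : t1 = 0 := by
        linear_combination ((-2) + (7/5) * α) * hq0 + ((4/5) + (-4/5) * α) * hq1 + ((-6/5) + (3/5) * α) * hq2 + ((2/5) + (-1/5) * α) * hq3 + (((-4/5) + (2/5) * α) * t0 + ((2/5) + (-1/5) * α) * t3) * hsgn + (((-4/5) + (11/5) * α ^ 2 + (-3) * α ^ 3 + (-1/5) * α ^ 4 + (-6/5) * α ^ 5) * t0 + ((-1) + 1 * α + (-4/5) * α ^ 2) * t1 + ((2/5) + (-3/5) * α + (3/5) * α ^ 2 + (1/5) * α ^ 3) * t2 + ((-2) * α ^ 2 + (7/5) * α ^ 3 +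 (4/5) * α ^ 4 + (1/5) * α ^ 5) * t3) * ha2
      have he2 : t2 = 0 := by
        linear_combination ((-147/55) + (94/55) * α) * hq0 + ((-87/55) + (37/55) * α) * hq1 + ((-56/55) + (29/55) * α) * hq2 + ((2/5) + (-1/5) * α) * hq3 + (((-34/55) + (18/55) * α) * t0 + ((2/5) + (-1/5) * α) * t3) * hsgn + (((-34/55) + (-14/55) * α + (29/11) * α ^ 2 + (-122/55) * α ^ 3 + (9/55) * α ^ 4 + (-83/55) * α ^ 5) * t0 + ((-13/11) * α ^ 2) * t1 + ((-3/5) + (2/5) * α + (54/55) * α ^ 2 + (1/5) * α ^ 3) * t2 + ((-147/55) * α ^ 2 + (131/55) * α ^ 3 + (-37/55) * α ^ 4 + (1/5) * α ^ 5) * t3) * ha2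
      have he3 : t3 = 0 := by
        linear_combination ((126/55) + (-79/55) * α) * hq0 + ((84/55) + (-49/55) * α) * hq1 + ((-7/55) + (1/11) * α) * hq2 + (((-7/55) + (1/11) * α) * t0) * hsgn + (((-7/55) + (12/55) * α + (-19/55) * α ^ 2 + (-18/55) * α ^ 3 + (-47/55) * α ^ 4 + (79/55) * α ^ 5) * t0 + ((84/55) * α ^ 2) * t1 + ((-84/55) * α ^ 2) * t2 + ((-1) + 1 * α + (16/55) * α ^ 2 + (-8/11) * α ^ 3 + (49/55) * α ^ 4) * t3) * ha2
      refine ⟨0, ?_⟩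
      rw [hdecomp, he0, he1, he2, he3, zero_smul]
      simp
    · have hsgn : cc = -(5 * α ^ 3 - 10 * α ^ 4) := by linear_combination hsgn'
      have he0 : t0 = 0 := by
        linear_combination ((1/5) + (-1/5) * α) * hq0 + ((2/5) + (-1/5) * α) * hq1 + ((-2/5) + (1/5) * α) * hq2 + (((-2/5) + (1/5) * α) * t0) * hsgn + (((-7/5) + (8/5) * α + (-3) * α ^ 2 + (11/5) * α ^ 3 + (1/5) * α ^ 5) * t0 + ((2/5) * α ^ 2) * t1 + ((-2/5) * α ^ 2) * t2 + ((1/5) * α ^ 2 + (-2/5) * α ^ 3 + (1/5) * α ^ 4) * t3) * ha2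
      have he1 : t1 = 0 := by
        linear_combination ((12/5) + (-7/5) * α) * hq0 + (2 + (-6/5) * α) * hq1 + ((8/5) + (-1) * α) * hq2 + ((2/5) + (-1/5) * α) * hq3 + ((2 + (-6/5) * α) * t0 + ((2/5) + (-1/5) * α) * t3) * hsgn + ((2 + (-22/5) * α + (47/5) * α ^ 2 + (-49/5) * α ^ 3 + (-9/5) * α ^ 4 + (8/5) * α ^ 5) * t0 + ((-1) + 1 * α + (2/5) * α ^ 2) * t1 + ((2/5) + (-3/5) * α + (-3/5) * α ^ 2 + (1/5) * α ^ 3) * t2 + ((12/5) * α ^ 2 + (-9/5) * α ^ 3 + (6/5) * α ^ 4 + (1/5) * α ^ 5) * t3) * ha2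
      have he2 : t2 = 0 := by
        linear_combination ((9/5) + (-8/5) * α) * hq0 + ((1/5) + (1/5) * α) * hq1 + ((6/5) + (-1) * α) * hq2 + ((2/5) + (-1/5) * α) * hq3 + (((8/5) + (-6/5) * α) * t0 + ((2/5) + (-1/5) * α) * t3) * hsgn + (((8/5) + (-4) * α + (43/5) * α ^ 2 + (-44/5) * α ^ 3 + (-1) * α ^ 4 + (9/5) * α ^ 5) * t0 + ((3/5) * α ^ 2) * t1 + ((-3/5) + (2/5) * α + (-4/5) * α ^ 2 + (1/5) * α ^ 3) * t2 + ((9/5) * α ^ 2 + (-7/5) * α ^ 3 + (-1/5) * α ^ 4 + (1/5) * α ^ 5) * t3) * ha2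
      have he3 : t3 = 0 := by
        linear_combination (2 + (-7/5) * α) * hq0 + ((6/5) + (-3/5) * α) * hq1 + ((1/5) + (-1/5) * α) * hq2 + (((1/5) + (-1/5) * α) * t0) * hsgn + (((1/5) + (-2/5) * α + (3/5) * α ^ 2 + (-6/5) * α ^ 3 + (-3/5) * α ^ 4 + (7/5) * α ^ 5) * t0 + ((6/5) * α ^ 2) * t1 + ((-6/5) * α ^ 2) * t2 + ((-1) + 1 * α + (-2/5) * α ^ 3 + (3/5) * α ^ 4) * t3) * ha2
      refine ⟨0, ?_⟩
      rw [hdecomp, he0, he1, he2, he3, zero_smul]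
      simp
  · -- class 4
    have hsub : f.support ⊆ ({ee 0 0 0 3, ee 0 1 2 0, ee 1 1 0 1, ee 2 0 1 0} : Finset (Fin 4 →₀ ℕ)) := by
      intro m hm
      have hd3 := hdeg m hm
      have hw5 := (hmod m hm m0 hm0).trans hk
      have hca := classEnum4 (m 0) (m 1) (m 2) (m 3) hd3 hw5
      simp only [Finset.mem_insert, Finset.mem_singleton]
      rcases hca with ⟨w0, w1, w2, w3⟩ | ⟨w0, w1, w2, w3⟩ | ⟨w0, w1, w2, w3⟩ | ⟨w0, w1, w2, w3⟩
      · left; rw [eq_ee m, w0, w1, w2, w3]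
      · right; left; rw [eq_ee m, w0, w1, w2, w3]
      · right; right; left; rw [eq_ee m, w0, w1, w2, w3]
      · right; right; right; rw [eq_ee m, w0, w1, w2, w3]
    set t0 := MvPolynomial.coeff (ee 0 0 0 3) f with ht0def
    set t1 := MvPolynomial.coeff (ee 0 1 2 0) f with ht1def
    set t2 := MvPolynomial.coeff (ee 1 1 0 1) f with ht2def
    set t3 := MvPolynomial.coeff (ee 2 0 1 0) f with ht3def
    clear_value t0 t1 t2 t3
    have hne1 : ee 0 0 0 3 ∉ ({ee 0 1 2 0, ee 1 1 0 1, ee 2 0 1 0} : Finset (Fin 4 →₀ ℕ)) := by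
      simp [Finset.mem_insert, Finset.mem_singleton, ee_inj]
    have hne2 : ee 0 1 2 0 ∉ ({ee 1 1 0 1, ee 2 0 1 0} : Finset (Fin 4 →₀ ℕ)) := by
      simp [Finset.mem_insert, Finset.mem_singleton, ee_inj]
    have hne3 : ee 1 1 0 1 ∉ ({ee 2 0 1 0} : Finset (Fin 4 →₀ ℕ)) := by
      simp [Finset.mem_singleton, ee_inj]
    have hdecomp : f = C t0 * X 0 ^ 0 * X 1 ^ 0 * X 2 ^ 0 * X 3 ^ 3 + C t1 * X 0 ^ 0 * X 1 ^ 1 * X 2 ^ 2 * X 3 ^ 0 + C t2 * X 0 ^ 1 * X 1 ^ 1 * X 2 ^ 0 * X 3 ^ 1 + C t3 * X 0 ^ 2 * X 1 ^ 0 * X 2 ^ 1 * X 3 ^ 0 := by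
      have h1 : f = ∑ m ∈ ({ee 0 0 0 3, ee 0 1 2 0, ee 1 1 0 1, ee 2 0 1 0} : Finset (Fin 4 →₀ ℕ)), (monomial m) (MvPolynomial.coeff m f) :=
        (MvPolynomial.as_sum f).trans (Finset.sum_subset hsub (fun x _ hx => by
          rw [MvPolynomial.notMem_support_iff.mp hx, map_zero]))
      rw [h1, Finset.sum_insert hne1, Finset.sum_insert hne2, Finset.sum_insert hne3,
        Finset.sum_singleton, mon_eq, mon_eq, mon_eq, mon_eq, ← ht0def, ← ht1def, ← ht2def, ← ht3def]
      ring
    have hq0 : t0 * ((-1) * α ^ 3) + t1 * (1 * α ^ 5) + t2 * ((-1) * α ^ 2) + t3 * (1 * α ^ 2) = cc * (t0 * 0 + t1 * 0 + t2 * 0 + t3 * 0) := by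
      have hqq := congrArg (eval ![(1 : ℂ), 0, 0, 0]) hIf
      rw [substM_eval, MvPolynomial.smul_eq_C_mul, hdecomp, hI] at hqq
      simp only [map_add, _root_.map_mul, map_pow, eval_add, eval_mul, eval_pow, eval_C, eval_X, Matrix.mulVec, dotProduct, Fin.sum_univ_four, Matrix.cons_val_zero, Matrix.cons_val_one, Matrix.head_cons, Matrix.cons_val_two, Matrix.tail_cons, Matrix.cons_val_three, Matrix.of_apply, Matrix.cons_val', Matrix.empty_val', Matrix.cons_val_fin_one, Matrix.head_fin_const] at hqq
      linear_combination hqq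
    have hq1 : t0 * (1) + t1 * (1 * α ^ 4) + t2 * (1 * α ^ 3) + t3 * ((-1) * α ^ 3) = cc * (t0 * 0 + t1 * 0 + t2 * 0 + t3 * 0) := by
      have hqq := congrArg (eval ![(0 : ℂ), 1, 0, 0]) hIf
      rw [substM_eval, MvPolynomial.smul_eq_C_mul, hdecomp, hI] at hqq
      simp only [map_add, _root_.map_mul, map_pow, eval_add, eval_mul, eval_pow, eval_C, eval_X, Matrix.mulVec, dotProduct, Fin.sum_univ_four, Matrix.cons_val_zero, Matrix.cons_val_one, Matrix.head_cons, Matrix.cons_val_two, Matrix.tail_cons, Matrix.cons_val_three, Matrix.of_apply, Matrix.cons_val', Matrix.empty_val', Matrix.cons_val_fin_one, Matrix.head_fin_const] at hqq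
      linear_combination hqq
    have hq2 : t0 * (1 * α ^ 3) + t1 * ((-1) * α) + t2 * ((-1) * α ^ 4) + t3 * (1 * α ^ 4) = cc * (t0 * 0 + t1 * 0 + t2 * 0 + t3 * 0) := by
      have hqq := congrArg (eval ![(0 : ℂ), 0, 1, 0]) hIf
      rw [substM_eval, MvPolynomial.smul_eq_C_mul, hdecomp, hI] at hqq
      simp only [map_add, _root_.map_mul, map_pow, eval_add, eval_mul, eval_pow, eval_C, eval_X, Matrix.mulVec, dotProduct, Fin.sum_univ_four, Matrix.cons_val_zero, Matrix.cons_val_one, Matrix.head_cons, Matrix.cons_val_two, Matrix.tail_cons, Matrix.cons_val_three, Matrix.of_apply, Matrix.cons_val', Matrix.empty_val', Matrix.cons_val_fin_one, Matrix.head_fin_const] at hqq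
      linear_combination hqq
    have hq3 : t0 * (1) + t1 * (1 * α ^ 2 + (-2) * α ^ 3 + 3 * α ^ 4 + (-2) * α ^ 5 + 1 * α ^ 6) + t2 * (1 * α ^ 2 + 1 * α ^ 3 + 1 * α ^ 4) + t3 * (1 + 1 * α + 2 * α ^ 2 + 1 * α ^ 3 + 2 * α ^ 4 + 1 * α ^ 5 + 1 * α ^ 6) = cc * (t0 * 0 + t1 * 1 + t2 * 0 + t3 * 1) := by
      have hqq := congrArg (eval ![(1 : ℂ), 1, 1, 0]) hIf
      rw [substM_eval, MvPolynomial.smul_eq_C_mul, hdecomp, hI] at hqq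
      simp only [map_add, _root_.map_mul, map_pow, eval_add, eval_mul, eval_pow, eval_C, eval_X, Matrix.mulVec, dotProduct, Fin.sum_univ_four, Matrix.cons_val_zero, Matrix.cons_val_one, Matrix.head_cons, Matrix.cons_val_two, Matrix.tail_cons, Matrix.cons_val_three, Matrix.of_apply, Matrix.cons_val', Matrix.empty_val', Matrix.cons_val_fin_one, Matrix.head_fin_const] at hqq
      linear_combination hqq
    rcases mul_eq_zero.mp hu with hsgn' | hsgn'
    · have hsgn : cc = 5 * α ^ 3 - 10 * α ^ 4 := by linear_combination hsgn'
      have he0 : t0 = 0 := by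
        linear_combination ((-2/5) + (1/5) * α) * hq0 + ((4/5) + (-2/5) * α) * hq1 + ((-1/5) + (1/5) * α) * hq2 + (((-1/5) + (-1/5) * α) * t0 + ((1/5) * α + (-2/5) * α ^ 2 + (3/5) * α ^ 3 + (-1/5) * α ^ 4) * t1 + ((2/5) * α ^ 2 + (1/5) * α ^ 3) * t2 + ((-2/5) * α ^ 2 + (-1/5) * α ^ 3) * t3) * ha2
      have he1 : t1 = 0 := by
        linear_combination ((-3/5) + (2/5) * α) * hq0 + ((2/5) + (-1/5) * α) * hq1 + (1 + (-3/5) * α) * hq2 + (((2/5) + (-3/5) * α + 1 * α ^ 2) * t0 + ((-1) + (-2/5) * α ^ 2 + (2/5) * α ^ 3 + (-2/5) * α ^ 4) * t1 + ((3/5) * α ^ 2 + (-3/5) * α ^ 3) * t2 + ((-3/5) * α ^ 2 + (3/5) * α ^ 3) * t3) * ha2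
      have he2 : t2 = 0 := by
        linear_combination ((-109/95) + (63/95) * α) * hq0 + ((-4/19) + (14/95) * α) * hq1 + ((-126/95) + (73/95) * α) * hq2 + ((17/95) + (-2/19) * α) * hq3 + (((17/95) + (-2/19) * α) * t1 + ((17/95) + (-2/19) * α) * t3) * hsgn + (((-3/95) + (7/95) * α + (-2/19) * α ^ 2) * t0 + ((126/95) * α + (-182/95) * α ^ 2 + (179/95) * α ^ 3 + (-18/19) * α ^ 4 + (2/19) * α ^ 5) * t1 + ((-1) + 1 * α + (-64/95) * α ^ 2 + (83/95) * α ^ 3) * t2 + ((17/95) + (-2/19) * α + (-58/95) * α ^ 2 + (43/95) * α ^ 3 + (3/95) * α ^ 4 + (2/19) * α ^ 5) * t3) * ha2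
      have he3 : t3 = 0 := by
        linear_combination ((81/95) + (-51/95) * α) * hq0 + ((-58/95) + (33/95) * α) * hq1 + ((-88/95) + (54/95) * α) * hq2 + ((17/95) + (-2/19) * α) * hq3 + (((17/95) + (-2/19) * α) * t1 + ((17/95) + (-2/19) * α) * t3) * hsgn + (((-41/95) + (64/95) * α + (-21/19) * α ^ 2) * t0 + ((88/95) * α + (-25/19) * α ^ 2 + (84/95) * α ^ 3 + (24/95) * α ^ 4 + (2/19) * α ^ 5) * t1 + ((-64/95) * α ^ 2 + (64/95) * α ^ 3) * t2 + ((-78/95) + (17/19) * α + (-58/95) * α ^ 2 + (62/95) * α ^ 3 + (3/95) * α ^ 4 + (2/19) * α ^ 5) * t3) * ha2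
      refine ⟨0, ?_⟩
      rw [hdecomp, he0, he1, he2, he3, zero_smul]
      simp
    · have hsgn : cc = -(5 * α ^ 3 - 10 * α ^ 4) := by linear_combination hsgn'
      have he0 : t0 = 0 := by
        linear_combination ((-2/5) + (1/5) * α) * hq0 + ((4/5) + (-2/5) * α) * hq1 + ((-1/5) + (1/5) * α) * hq2 + (((-1/5) + (-1/5) * α) * t0 + ((1/5) * α + (-2/5) * α ^ 2 + (3/5) * α ^ 3 + (-1/5) * α ^ 4) * t1 + ((2/5) * α ^ 2 + (1/5) * α ^ 3) * t2 + ((-2/5) * α ^ 2 + (-1/5) * α ^ 3) * t3) * ha2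
      have he1 : t1 = 0 := by
        linear_combination ((-3/5) + (2/5) * α) * hq0 + ((2/5) + (-1/5) * α) * hq1 + (1 + (-3/5) * α) * hq2 + (((2/5) + (-3/5) * α + 1 * α ^ 2) * t0 + ((-1) + (-2/5) * α ^ 2 + (2/5) * α ^ 3 + (-2/5) * α ^ 4) * t1 + ((3/5) * α ^ 2 + (-3/5) * α ^ 3) * t2 + ((-3/5) * α ^ 2 + (3/5) * α ^ 3) * t3) * ha2
      have he2 : t2 = 0 := by
        linear_combination ((-11/5) + (7/5) * α) * hq0 + ((4/5) + (-2/5) * α) * hq1 + ((-8/5) + 1 * α) * hq2 + ((-3/5) + (2/5) * α) * hq3 + (((-3/5) + (2/5) * α) * t1 + ((-3/5) + (2/5) * α) * t3) * hsgn + (((1/5) + (-1/5) * α + (2/5) * α ^ 2) * t0 + ((8/5) * α + (-16/5) * α ^ 2 + (17/5) * α ^ 3 + (-2/5) * α ^ 4 + (-2/5) * α ^ 5) * t1 + ((-1) + 1 * α + (-2/5) * α ^ 2 + (3/5) * α ^ 3) * t2 + ((-3/5) + (2/5) * α + (-4) * α ^ 2 + (11/5) * α ^ 3 + (-1/5) *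 α ^ 4 + (-2/5) * α ^ 5) * t3) * ha2
      have he3 : t3 = 0 := by
        linear_combination ((-1/5) + (1/5) * α) * hq0 + ((2/5) + (-1/5) * α) * hq1 + ((-6/5) + (4/5) * α) * hq2 + ((-3/5) + (2/5) * α) * hq3 + (((-3/5) + (2/5) * α) * t1 + ((-3/5) + (2/5) * α) * t3) * hsgn + (((-1/5) + (2/5) * α + (-3/5) * α ^ 2) * t0 + ((6/5) * α + (-13/5) * α ^ 2 + (12/5) * α ^ 3 + (4/5) * α ^ 4 + (-2/5) * α ^ 5) * t1 + ((-2/5) * α ^ 2 + (2/5) * α ^ 3) * t2 + ((-8/5) + (7/5) * α + (-4) * α ^ 2 + (12/5) * α ^ 3 + (-1/5) * α ^ 4 + (-2/5) * α ^ 5) * t3) * ha2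
      refine ⟨0, ?_⟩
      rw [hdecomp, he0, he1, he2, he3, zero_smul]
      simp
end

section
/- Let ω = exp(2πi/3) and E₃ the matrix with rows [√3/2, 1/2, 0, 0], [1/2, -√3/2, 0, 0], [0,0,0,1], [0,0,1,0]. If f is a cubic form of the shape a₁(x³ - i y³) + a₃(z³ - i t³) + x²(b₁₂ y + b₁₃ z + b₁₄ t) + y²(i b₁₂ x + i b₁₄ z - i b₁₃ t) + z²(b₃₁ x + b₃₂ y + b₃₄ t) + t²(i b₃₂ x - i b₃₁ y + i b₃₄ z) + c₁ yzt - i c₁ xzt + c₃ xyt - i c₃ xyz, and f∘E₃⁻¹ = ±f, then a₃ = b₃₄ = b₃₁ = b₃₂ = 0, and consequently V(f) is singular at the point (0:0:0:1). -/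
open MvPolynomial Matrix Complex

theorem eval_substM' (A : Matrix (Fin 4) (Fin 4) ℂ) (f : MvPolynomial (Fin 4) ℂ)
    (v : Fin 4 → ℂ) :
    eval v (substM A f) = eval (fun i => ∑ j : Fin 4, A i j * v j) f := by
  have h := aeval_bind₁ (R := ℂ) (S := ℂ) v
    (fun i => ∑ j : Fin 4, MvPolynomial.C (A i j) * MvPolynomial.X j) f
  rw [substM, aeval_eq_bind₁]
  simpa using h

set_option maxHeartbeats 1000000 in
theorem stmt18 (a₁ a₃ b₁₂ b₁₃ b₁₄ b₃₁ b₃₂ b₃₄ c₁ c₃ : ℂ)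
    (f : MvPolynomial (Fin 4) ℂ)
    (hf : f =
      MvPolynomial.C a₁ * (MvPolynomial.X 0 ^ 3 - MvPolynomial.C Complex.I * MvPolynomial.X 1 ^ 3) +
      MvPolynomial.C a₃ * (MvPolynomial.X 2 ^ 3 - MvPolynomial.C Complex.I * MvPolynomial.X 3 ^ 3) +
      MvPolynomial.X 0 ^ 2 * (MvPolynomial.C b₁₂ * MvPolynomial.X 1 +
        MvPolynomial.C b₁₃ * MvPolynomial.X 2 + MvPolynomial.C b₁₄ * MvPolynomial.X 3) +
      MvPolynomial.X 1 ^ 2 * (MvPolynomial.C (Complex.I * b₁₂) * MvPolynomial.X 0 +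
        MvPolynomial.C (Complex.I * b₁₄) * MvPolynomial.X 2 -
        MvPolynomial.C (Complex.I * b₁₃) * MvPolynomial.X 3) +
      MvPolynomial.X 2 ^ 2 * (MvPolynomial.C b₃₁ * MvPolynomial.X 0 +
        MvPolynomial.C b₃₂ * MvPolynomial.X 1 + MvPolynomial.C b₃₄ * MvPolynomial.X 3) +
      MvPolynomial.X 3 ^ 2 * (MvPolynomial.C (Complex.I * b₃₂) * MvPolynomial.X 0 -
        MvPolynomial.C (Complex.I * b₃₁) * MvPolynomial.X 1 +
        MvPolynomial.C (Complex.I * b₃₄) * MvPolynomial.X 2) +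
      MvPolynomial.C c₁ * (MvPolynomial.X 1 * MvPolynomial.X 2 * MvPolynomial.X 3) -
      MvPolynomial.C (Complex.I * c₁) * (MvPolynomial.X 0 * MvPolynomial.X 2 * MvPolynomial.X 3) +
      MvPolynomial.C c₃ * (MvPolynomial.X 0 * MvPolynomial.X 1 * MvPolynomial.X 3) -
      MvPolynomial.C (Complex.I * c₃) * (MvPolynomial.X 0 * MvPolynomial.X 1 * MvPolynomial.X 2))
    (E₃ : Matrix (Fin 4) (Fin 4) ℂ)
    (hE₃ : E₃ = !![(Real.sqrt 3 : ℂ)/2, 1/2, 0, 0;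
                   1/2, -(Real.sqrt 3 : ℂ)/2, 0, 0;
                   0, 0, 0, 1;
                   0, 0, 1, 0])
    (hinv : substM E₃⁻¹ f = f ∨ substM E₃⁻¹ f = -f) :
    a₃ = 0 ∧ b₃₄ = 0 ∧ b₃₁ = 0 ∧ b₃₂ = 0 ∧
      (MvPolynomial.eval ![0, 0, 0, 1] f = 0 ∧
        ∀ i : Fin 4, MvPolynomial.eval ![0, 0, 0, 1] (MvPolynomial.pderiv i f) = 0) := by
  have hs : ((Real.sqrt 3 : ℝ) : ℂ)^2 = 3 := by
    norm_cast; rw [sq]; exact Real.mul_self_sqrt (by norm_num)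
  have hEinv : E₃⁻¹ = E₃ := by
    apply Matrix.inv_eq_right_inv
    rw [hE₃]
    ext i j
    fin_cases i <;> fin_cases j <;>
      simp [Matrix.mul_apply, Fin.sum_univ_four, Matrix.one_apply,
        Matrix.vecHead, Matrix.vecTail] <;>
      (try ring_nf) <;>
      linear_combination hs/4
  rw [hEinv] at hinv
  obtain ⟨ε, hε, key⟩ : ∃ ε : ℂ, (ε = 1 ∨ ε = -1) ∧ ∀ v : Fin 4 → ℂ,
      eval (fun i => ∑ j : Fin 4, E₃ i j * v j) f = ε * eval v f := by
    rcases hinv with h | h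
    · exact ⟨1, Or.inl rfl, fun v => by
        have h' := congrArg (eval v) h
        rw [eval_substM'] at h'
        simpa using h'⟩
    · exact ⟨-1, Or.inr rfl, fun v => by
        have h' := congrArg (eval v) h
        rw [eval_substM'] at h'
        simpa using h'⟩
  have hA := key ![0,0,1,0]
  have hB := key ![0,0,1,1]
  have hC := key ![0,0,1,-1]
  have h0 := key ![1,0,0,0]
  have h1 := key ![1,0,1,0]
  have h2 := key ![1,0,-1,0]
  have h3 := key ![1,0,0,1]
  have h4 := key ![1,0,0,-1]
  simp only [hf, hE₃] at hA hB hC h0 h1 h2 h3 h4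
  simp [Fin.sum_univ_four, Matrix.vecHead, Matrix.vecTail] at hA
  simp [Fin.sum_univ_four, Matrix.vecHead, Matrix.vecTail] at hB
  simp [Fin.sum_univ_four, Matrix.vecHead, Matrix.vecTail] at hC
  simp [Fin.sum_univ_four, Matrix.vecHead, Matrix.vecTail] at h0
  simp [Fin.sum_univ_four, Matrix.vecHead, Matrix.vecTail] at h1
  simp [Fin.sum_univ_four, Matrix.vecHead, Matrix.vecTail] at h2
  simp [Fin.sum_univ_four, Matrix.vecHead, Matrix.vecTail] at h3
  simp [Fin.sum_univ_four, Matrix.vecHead, Matrix.vecTail] at h4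
  have ha₃ : a₃ = 0 := by
    rcases hε with rfl | rfl
    · linear_combination ((Complex.I - 1)/2) * hA + (a₃/2) * Complex.I_sq
    · linear_combination ((Complex.I + 1)/2) * hA + (a₃/2) * Complex.I_sq
  have hb₃₄ : b₃₄ = 0 := by
    rcases hε with rfl | rfl
    · linear_combination ((1 + Complex.I)/4) * hC + Complex.I * ha₃ + ((a₃ + b₃₄)/2) * Complex.I_sq
    · linear_combination ((1 - Complex.I)/4) * hB + Complex.I * ha₃ + ((b₃₄ - a₃)/2) * Complex.I_sq
  have hb₃₂ : b₃₂ = 0 := by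
    rcases hε with rfl | rfl
    · linear_combination (((Real.sqrt 3:ℝ):ℂ)/4) * h1 + (((Real.sqrt 3:ℝ):ℂ)/4) * h2
        - (((Real.sqrt 3:ℝ):ℂ)/2) * h0 + ((1 + Complex.I/2)/2) * h3
        + ((1 + Complex.I/2)/2) * h4 - (1 + Complex.I/2) * h0
        - (Complex.I * b₃₂/4) * hs + (b₃₂/2) * Complex.I_sq
    · linear_combination (-((Real.sqrt 3:ℝ):ℂ)/4) * h1 + (-((Real.sqrt 3:ℝ):ℂ)/4) * h2
        - (-((Real.sqrt 3:ℝ):ℂ)/2) * h0 + ((-1 + Complex.I/2)/(-2)) * h3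
        + ((-1 + Complex.I/2)/(-2)) * h4 - ((-1 + Complex.I/2)/(-1)) * h0
        + (Complex.I * b₃₂/4) * hs + (b₃₂/2) * Complex.I_sq
  have hb₃₁ : b₃₁ = 0 := by
    have hsq3 : ((Real.sqrt 3:ℝ):ℂ) ≠ 0 := by
      rw [Complex.ofReal_ne_zero]
      positivity
    have hsb : ((Real.sqrt 3:ℝ):ℂ) * b₃₁ = 0 := by
      rcases hε with rfl | rfl
      · linear_combination h3 + h4 - 2*h0 + (2*Complex.I - 1)*hb₃₂
      · linear_combination h3 + h4 - 2*h0 + (-2*Complex.I - 1)*hb₃₂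
    exact (mul_eq_zero.mp hsb).resolve_left hsq3
  subst ha₃ hb₃₄ hb₃₁ hb₃₂
  refine ⟨rfl, rfl, rfl, rfl, ?_, ?_⟩
  · simp [hf, Matrix.vecHead, Matrix.vecTail]
  · intro i
    fin_cases i <;>
      simp [hf, pderiv_mul, pderiv_X, Matrix.vecHead, Matrix.vecTail]
end
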